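/- arXiv:0910.2080 — 3 statements merged into one kernel-verified Lean document; each statement's English description precedes it below -/
import Mathlib

section
/- If the torsion field (T_{1,1}², T_{1,2}²) is divergence-free in B and has vanishing normal component on ∂B, then for every φ ∈ C¹(B̄), the total torsion of the rotated frame satisfies 𝒯(Ñ) = 𝒯(N) + 2∫∫_B |∇φ|² dudv ≥ 𝒯(N), with equality iff φ is constant. -/
open MeasureTheory

set_option maxRecDepth 8000

section AuxiliaryLemmas

open Set Real

private lemma clm_pair (L : ℝ × ℝ →L[ℝ] ℝ) (x y : ℝ) :
    L (x, y) = x * L (1, 0) + y * L (0, 1) := by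
  have h : (x, y) = x • ((1:ℝ), (0:ℝ)) + y • ((0:ℝ), (1:ℝ)) := by
    simp [Prod.ext_iff]
  rw [h, map_add, L.map_smul, L.map_smul, smul_eq_mul, smul_eq_mul]

private lemma isOpen_disc : IsOpen {p : ℝ × ℝ | p.1 ^ 2 + p.2 ^ 2 < 1} := by
  have : {p : ℝ × ℝ | p.1 ^ 2 + p.2 ^ 2 < 1}
      = (fun p : ℝ × ℝ => p.1 ^ 2 + p.2 ^ 2) ⁻¹' Iio 1 := rfl
  rw [this]; exact isOpen_Iio.preimage (by fun_prop)

private lemma closure_disc :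
    closure {p : ℝ × ℝ | p.1 ^ 2 + p.2 ^ 2 < 1} = {p : ℝ × ℝ | p.1 ^ 2 + p.2 ^ 2 ≤ 1} := by
  apply le_antisymm
  · refine closure_minimal (fun p hp => show p.1 ^ 2 + p.2 ^ 2 ≤ 1 from le_of_lt hp) ?_
    exact isClosed_le (by fun_prop) continuous_const
  · intro p hp
    have hp' : p.1 ^ 2 + p.2 ^ 2 ≤ 1 := hp
    have htd : Filter.Tendsto (fun n : ℕ => (1 - 1/(n+1) : ℝ) • p) Filter.atTop (nhds p) := by
      have h1 : Filter.Tendsto (fun n : ℕ => (1 - 1/(n+1) : ℝ)) Filter.atTop (nhds 1) := by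
        have := tendsto_one_div_add_atTop_nhds_zero_nat (𝕜 := ℝ)
        simpa using (tendsto_const_nhds (x := (1:ℝ))).sub this
      simpa using h1.smul (tendsto_const_nhds (x := p))
    refine mem_closure_of_tendsto htd (Filter.Eventually.of_forall fun n => ?_)
    have ht0 : (0:ℝ) ≤ 1 - 1/(n+1) := by
      have : (1:ℝ)/(n+1) ≤ 1 := by
        rw [div_le_one (by positivity)]; linarith [Nat.cast_nonneg (α := ℝ) n]
      linarith
    have ht1 : (1 - 1/(n+1) : ℝ) < 1 := by
      have : (0:ℝ) < 1/(n+1) := by positivity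
      linarith
    show ((1 - 1/(n+1) : ℝ) • p).1 ^ 2 + ((1 - 1/(n+1) : ℝ) • p).2 ^ 2 < 1
    simp only [Prod.smul_fst, Prod.smul_snd, smul_eq_mul]
    set t := (1 - 1/(n+1) : ℝ) with hts
    clear_value t
    nlinarith [sq_nonneg p.1, sq_nonneg p.2, sq_nonneg t]

private lemma convex_combo_sq {a b x y : ℝ} (ha : 0 ≤ a) (hb : 0 ≤ b) (hab : a + b = 1) :
    (a * x + b * y) ^ 2 ≤ a * x ^ 2 + b * y ^ 2 := by
  nlinarith [mul_nonneg (mul_nonneg ha hb) (sq_nonneg (x - y))]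

private lemma convex_disc_le : Convex ℝ {p : ℝ × ℝ | p.1 ^ 2 + p.2 ^ 2 ≤ 1} := by
  intro p hp q hq a b ha hb hab
  have hp' : p.1 ^ 2 + p.2 ^ 2 ≤ 1 := hp
  have hq' : q.1 ^ 2 + q.2 ^ 2 ≤ 1 := hq
  show (a • p + b • q).1 ^ 2 + (a • p + b • q).2 ^ 2 ≤ 1
  have h1 : (a • p + b • q).1 = a * p.1 + b * q.1 := rfl
  have h2 : (a • p + b • q).2 = a * p.2 + b * q.2 := rfl
  rw [h1, h2]
  have k1 := convex_combo_sq (x := p.1) (y := q.1) ha hb hab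
  have k2 := convex_combo_sq (x := p.2) (y := q.2) ha hb hab
  nlinarith [mul_le_mul_of_nonneg_left hp' ha, mul_le_mul_of_nonneg_left hq' hb]

private lemma convex_disc_lt : Convex ℝ {p : ℝ × ℝ | p.1 ^ 2 + p.2 ^ 2 < 1} := by
  intro p hp q hq a b ha hb hab
  have hp' : p.1 ^ 2 + p.2 ^ 2 < 1 := hp
  have hq' : q.1 ^ 2 + q.2 ^ 2 < 1 := hq
  show (a • p + b • q).1 ^ 2 + (a • p + b • q).2 ^ 2 < 1
  have h1 : (a • p + b • q).1 = a * p.1 + b * q.1 := rfl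
  have h2 : (a • p + b • q).2 = a * p.2 + b * q.2 := rfl
  rw [h1, h2]
  have k1 := convex_combo_sq (x := p.1) (y := q.1) ha hb hab
  have k2 := convex_combo_sq (x := p.2) (y := q.2) ha hb hab
  rcases ha.eq_or_lt with rfl | ha'
  · simp only [zero_add] at hab; subst hab; simpa using hq'
  · nlinarith [mul_le_mul_of_nonneg_left hq'.le hb, mul_lt_mul_of_pos_left hp' ha']

private lemma compact_disc : IsCompact {p : ℝ × ℝ | p.1 ^ 2 + p.2 ^ 2 ≤ 1} := by
  refine IsCompact.of_isClosed_subset (isCompact_Icc (a := ((-1 : ℝ), (-1 : ℝ))) (b := (1,1)))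
    (isClosed_le (by fun_prop) continuous_const) ?_
  intro p hp
  have hp' : p.1 ^ 2 + p.2 ^ 2 ≤ 1 := hp
  simp only [mem_Icc, Prod.le_def]
  refine ⟨⟨?_, ?_⟩, ?_, ?_⟩ <;> [skip; skip; skip; skip] <;>
    first
      | (show (-1 : ℝ) ≤ p.1; nlinarith [sq_nonneg p.2])
      | (show (-1 : ℝ) ≤ p.2; nlinarith [sq_nonneg p.1])
      | (show p.1 ≤ (1 : ℝ); nlinarith [sq_nonneg p.2])
      | (show p.2 ≤ (1 : ℝ); nlinarith [sq_nonneg p.1])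

private lemma uniqueDiffOn_disc : UniqueDiffOn ℝ {p : ℝ × ℝ | p.1 ^ 2 + p.2 ^ 2 ≤ 1} := by
  refine uniqueDiffOn_convex convex_disc_le ⟨0, ?_⟩
  rw [mem_interior]
  exact ⟨{p : ℝ × ℝ | p.1 ^ 2 + p.2 ^ 2 < 1}, fun p hp => show p.1 ^ 2 + p.2 ^ 2 ≤ 1 from le_of_lt hp, isOpen_disc, by norm_num⟩

private lemma polar_key (F₁ F₂ : ℝ × ℝ → ℝ) (q : ℝ × ℝ)
    (h₁ : DifferentiableAt ℝ F₁ (q.1 * cos q.2, q.1 * sin q.2))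
    (h₂ : DifferentiableAt ℝ F₂ (q.1 * cos q.2, q.1 * sin q.2)) :
    ∃ L₁ L₂ : ℝ × ℝ →L[ℝ] ℝ,
      HasFDerivAt (fun z : ℝ × ℝ => z.1 * (F₁ (z.1 * cos z.2, z.1 * sin z.2) * cos z.2
          + F₂ (z.1 * cos z.2, z.1 * sin z.2) * sin z.2)) L₁ q ∧
      HasFDerivAt (fun z : ℝ × ℝ => F₂ (z.1 * cos z.2, z.1 * sin z.2) * cos z.2
          - F₁ (z.1 * cos z.2, z.1 * sin z.2) * sin z.2) L₂ q ∧
      L₁ (1, 0) + L₂ (0, 1)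
        = q.1 * (fderiv ℝ F₁ (q.1 * cos q.2, q.1 * sin q.2) (1, 0)
            + fderiv ℝ F₂ (q.1 * cos q.2, q.1 * sin q.2) (0, 1)) := by
  have hfst : HasFDerivAt (fun z : ℝ × ℝ => z.1) (ContinuousLinearMap.fst ℝ ℝ ℝ) q :=
    hasFDerivAt_fst
  have hsnd : HasFDerivAt (fun z : ℝ × ℝ => z.2) (ContinuousLinearMap.snd ℝ ℝ ℝ) q :=
    hasFDerivAt_snd
  have hcos : HasFDerivAt (fun z : ℝ × ℝ => cos z.2)
      ((-sin q.2) • ContinuousLinearMap.snd ℝ ℝ ℝ) q :=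
    (Real.hasDerivAt_cos q.2).comp_hasFDerivAt q hsnd
  have hsin : HasFDerivAt (fun z : ℝ × ℝ => sin z.2)
      ((cos q.2) • ContinuousLinearMap.snd ℝ ℝ ℝ) q :=
    (Real.hasDerivAt_sin q.2).comp_hasFDerivAt q hsnd
  have hP := (hfst.mul hcos).prodMk (hfst.mul hsin)
  have hF₁ : HasFDerivAt (fun z : ℝ × ℝ => F₁ (z.1 * cos z.2, z.1 * sin z.2))
      ((fderiv ℝ F₁ (q.1 * cos q.2, q.1 * sin q.2)).comp
        ((q.1 • (-sin q.2) • ContinuousLinearMap.snd ℝ ℝ ℝ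
            + cos q.2 • ContinuousLinearMap.fst ℝ ℝ ℝ).prod
          (q.1 • cos q.2 • ContinuousLinearMap.snd ℝ ℝ ℝ
            + sin q.2 • ContinuousLinearMap.fst ℝ ℝ ℝ))) q :=
    h₁.hasFDerivAt.comp q hP
  have hF₂ : HasFDerivAt (fun z : ℝ × ℝ => F₂ (z.1 * cos z.2, z.1 * sin z.2))
      ((fderiv ℝ F₂ (q.1 * cos q.2, q.1 * sin q.2)).comp
        ((q.1 • (-sin q.2) • ContinuousLinearMap.snd ℝ ℝ ℝ
            + cos q.2 • ContinuousLinearMap.fst ℝ ℝ ℝ).prod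
          (q.1 • cos q.2 • ContinuousLinearMap.snd ℝ ℝ ℝ
            + sin q.2 • ContinuousLinearMap.fst ℝ ℝ ℝ))) q :=
    h₂.hasFDerivAt.comp q hP
  have hG₁ := hfst.mul ((hF₁.mul hcos).add (hF₂.mul hsin))
  have hG₂ := (hF₂.mul hcos).sub (hF₁.mul hsin)
  refine ⟨_, _, hG₁, hG₂, ?_⟩
  simp only [ContinuousLinearMap.add_apply, ContinuousLinearMap.smul_apply,
    ContinuousLinearMap.comp_apply, ContinuousLinearMap.sub_apply,
    ContinuousLinearMap.prod_apply, ContinuousLinearMap.coe_fst',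
    ContinuousLinearMap.coe_snd', smul_eq_mul, Prod.smul_mk, Prod.mk_add_mk, smul_zero,
    mul_zero, mul_one, zero_add, add_zero, Pi.mul_apply, Pi.add_apply]
  linear_combination
    (q.1 * Real.cos q.2) * clm_pair (fderiv ℝ F₁ (q.1 * Real.cos q.2, q.1 * Real.sin q.2))
        (Real.cos q.2) (Real.sin q.2)
      + (q.1 * Real.sin q.2) * clm_pair (fderiv ℝ F₂ (q.1 * Real.cos q.2, q.1 * Real.sin q.2))
        (Real.cos q.2) (Real.sin q.2)
      + Real.cos q.2 * clm_pair (fderiv ℝ F₂ (q.1 * Real.cos q.2, q.1 * Real.sin q.2))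
        (q.1 * -Real.sin q.2) (q.1 * Real.cos q.2)
      - Real.sin q.2 * clm_pair (fderiv ℝ F₁ (q.1 * Real.cos q.2, q.1 * Real.sin q.2))
        (q.1 * -Real.sin q.2) (q.1 * Real.cos q.2)
      + (q.1 * ((fderiv ℝ F₁ (q.1 * Real.cos q.2, q.1 * Real.sin q.2)) (1, 0)
          + (fderiv ℝ F₂ (q.1 * Real.cos q.2, q.1 * Real.sin q.2)) (0, 1)))
        * Real.sin_sq_add_cos_sq q.2

private lemma disc_divergence (F₁ F₂ : ℝ × ℝ → ℝ)
    (h₁ : ContDiffOn ℝ 1 F₁ {p : ℝ × ℝ | p.1 ^ 2 + p.2 ^ 2 ≤ 1})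
    (h₂ : ContDiffOn ℝ 1 F₂ {p : ℝ × ℝ | p.1 ^ 2 + p.2 ^ 2 ≤ 1})
    (hbd : ∀ w : ℝ × ℝ, w.1 ^ 2 + w.2 ^ 2 = 1 → w.1 * F₁ w + w.2 * F₂ w = 0) :
    ∫ w in {p : ℝ × ℝ | p.1 ^ 2 + p.2 ^ 2 < 1},
      (fderiv ℝ F₁ w (1, 0) + fderiv ℝ F₂ w (0, 1)) = 0 := by
  classical
  set Bs : Set (ℝ × ℝ) := {p : ℝ × ℝ | p.1 ^ 2 + p.2 ^ 2 < 1} with hBs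
  set K : Set (ℝ × ℝ) := {p : ℝ × ℝ | p.1 ^ 2 + p.2 ^ 2 ≤ 1} with hK
  have hBK : Bs ⊆ K := by
    intro p hp
    show p.1 ^ 2 + p.2 ^ 2 ≤ 1
    exact le_of_lt hp
  have hKnhds : ∀ w ∈ Bs, K ∈ nhds w := fun w hw =>
    Filter.mem_of_superset (isOpen_disc.mem_nhds hw) hBK
  have hdiff₁ : ∀ w ∈ Bs, DifferentiableAt ℝ F₁ w := fun w hw =>
    ((h₁.differentiableOn one_ne_zero).differentiableAt (hKnhds w hw))
  have hdiff₂ : ∀ w ∈ Bs, DifferentiableAt ℝ F₂ w := fun w hw =>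
    ((h₂.differentiableOn one_ne_zero).differentiableAt (hKnhds w hw))
  have hDW₁ : ∀ w ∈ Bs, fderivWithin ℝ F₁ K w = fderiv ℝ F₁ w := fun w hw =>
    fderivWithin_of_mem_nhds (hKnhds w hw)
  have hDW₂ : ∀ w ∈ Bs, fderivWithin ℝ F₂ K w = fderiv ℝ F₂ w := fun w hw =>
    fderivWithin_of_mem_nhds (hKnhds w hw)
  set g : ℝ × ℝ → ℝ :=
    fun w => fderivWithin ℝ F₁ K w (1, 0) + fderivWithin ℝ F₂ K w (0, 1) with hg
  have hgK : ContinuousOn g K := by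
    refine ContinuousOn.add ?_ ?_
    · exact (h₁.continuousOn_fderivWithin uniqueDiffOn_disc le_rfl).clm_apply continuousOn_const
    · exact (h₂.continuousOn_fderivWithin uniqueDiffOn_disc le_rfl).clm_apply continuousOn_const
  -- the function in polar coordinates
  set P : ℝ × ℝ → ℝ × ℝ := fun z => (z.1 * cos z.2, z.1 * sin z.2) with hP
  have hPcont : Continuous P := by fun_prop
  set R : Set (ℝ × ℝ) := Ioo (0:ℝ) 1 ×ˢ Ioo (-π) π with hR
  have hPR : ∀ q ∈ R, P q ∈ Bs := by
    rintro ⟨r, θ⟩ ⟨hr, hθ⟩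
    have h1 : (r * cos θ) ^ 2 + (r * sin θ) ^ 2 = r ^ 2 := by
      have := sin_sq_add_cos_sq θ; ring_nf; nlinarith [this]
    show (r * cos θ) ^ 2 + (r * sin θ) ^ 2 < 1
    rw [h1]; nlinarith [hr.1, hr.2]
  have hPK : ∀ q ∈ Icc ((0:ℝ), -π) (1, π), P q ∈ K := by
    rintro ⟨r, θ⟩ hq
    rw [Icc_prod_eq, mem_prod] at hq
    have h1 : (r * cos θ) ^ 2 + (r * sin θ) ^ 2 = r ^ 2 := by
      have := sin_sq_add_cos_sq θ; ring_nf; nlinarith [this]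
    have hr0 : (0:ℝ) ≤ r := hq.1.1
    have hr1 : r ≤ 1 := hq.1.2
    show (r * cos θ) ^ 2 + (r * sin θ) ^ 2 ≤ 1
    rw [h1]; nlinarith [hr0, hr1]
  -- step 1: replace fderiv by fderivWithin
  have step1 : ∫ w in Bs, (fderiv ℝ F₁ w (1, 0) + fderiv ℝ F₂ w (0, 1)) = ∫ w in Bs, g w := by
    refine setIntegral_congr_fun isOpen_disc.measurableSet fun w hw => ?_
    rw [hg]; simp only [hDW₁ w hw, hDW₂ w hw]
  -- step 2: polar coordinates
  have step2 : ∫ w in Bs, g w = ∫ q in R, q.1 * g (P q) := by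
    rw [← integral_indicator isOpen_disc.measurableSet,
      ← integral_comp_polarCoord_symm (Bs.indicator g)]
    have hptfm : ∀ q : ℝ × ℝ, q.1 • Bs.indicator g (polarCoord.symm q)
        = (P ⁻¹' Bs).indicator (fun q => q.1 * g (P q)) q := by
      intro q
      have hsymm : polarCoord.symm q = P q := rfl
      rw [Set.indicator_apply, Set.indicator_apply, hsymm, mem_preimage]
      by_cases h : P q ∈ Bs
      · simp only [if_pos h, smul_eq_mul]
      · simp only [if_neg h, smul_zero, mul_zero]
    simp_rw [hptfm]
    rw [setIntegral_indicator (hPcont.measurable (isOpen_disc.measurableSet))]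
    have hset : polarCoord.target ∩ P ⁻¹' Bs = R := by
      rw [polarCoord_target]
      ext ⟨r, θ⟩
      simp only [mem_inter_iff, mem_prod, mem_Ioi, mem_Ioo, mem_preimage, hR]
      constructor
      · rintro ⟨⟨hr0, hθ⟩, hmem⟩
        have hmem' : (r * cos θ) ^ 2 + (r * sin θ) ^ 2 < 1 := hmem
        have h1 : (r * cos θ) ^ 2 + (r * sin θ) ^ 2 = r ^ 2 := by
          have := sin_sq_add_cos_sq θ; ring_nf; nlinarith [this]
        have hr2 : r ^ 2 < 1 := by rw [← h1]; exact hmem'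
        exact ⟨⟨hr0, by nlinarith⟩, hθ⟩
      · rintro ⟨⟨hr0, hr1⟩, hθ⟩
        refine ⟨⟨hr0, hθ⟩, ?_⟩
        have h1 : (r * cos θ) ^ 2 + (r * sin θ) ^ 2 = r ^ 2 := by
          have := sin_sq_add_cos_sq θ; ring_nf; nlinarith [this]
        show (r * cos θ) ^ 2 + (r * sin θ) ^ 2 < 1
        rw [h1]; nlinarith
    rw [hset]
  -- step 3: R is a.e. equal to the closed rectangle
  have haeR : R =ᵐ[volume] Icc ((0:ℝ), -π) (1, π) := by
    rw [Icc_prod_eq, ae_eq_set]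
    constructor
    · have he : R \ (Icc (0:ℝ) 1 ×ˢ Icc (-π) π) = ∅ := by
        rw [diff_eq_empty, hR]
        exact prod_mono Ioo_subset_Icc_self Ioo_subset_Icc_self
      rw [he]; exact measure_empty
    · have hsub : Icc (0:ℝ) 1 ×ˢ Icc (-π) π \ R
          ⊆ (({0, 1} : Set ℝ) ×ˢ Icc (-π) π) ∪ (Icc (0:ℝ) 1 ×ˢ ({-π, π} : Set ℝ)) := by
        rintro ⟨x, y⟩ ⟨hmem, hnot⟩
        rw [mem_prod] at hmem
        obtain ⟨hx, hy⟩ := hmem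
        by_cases hx0 : x = 0
        · exact Or.inl ⟨by simp [hx0], hy⟩
        by_cases hx1 : x = 1
        · exact Or.inl ⟨by simp [hx1], hy⟩
        by_cases hy0 : y = -π
        · exact Or.inr ⟨hx, by simp [hy0]⟩
        by_cases hy1 : y = π
        · exact Or.inr ⟨hx, by simp [hy1]⟩
        exfalso
        refine hnot ?_
        rw [hR, mem_prod]
        exact ⟨⟨lt_of_le_of_ne hx.1 (Ne.symm hx0), lt_of_le_of_ne hx.2 hx1⟩,
          ⟨lt_of_le_of_ne hy.1 (Ne.symm hy0), lt_of_le_of_ne hy.2 hy1⟩⟩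
      refine measure_mono_null hsub ?_
      refine measure_union_null ?_ ?_
      · rw [Measure.volume_eq_prod, Measure.prod_prod]
        have : volume ({0, 1} : Set ℝ) = 0 := (Set.toFinite _).measure_zero volume
        rw [this, zero_mul]
      · rw [Measure.volume_eq_prod, Measure.prod_prod]
        have : volume ({-π, π} : Set ℝ) = 0 := (Set.toFinite _).measure_zero volume
        rw [this, mul_zero]
  -- the polar-coordinate vector field
  set G₁ : ℝ × ℝ → ℝ := fun z => z.1 * (F₁ (z.1 * cos z.2, z.1 * sin z.2) * cos z.2
      + F₂ (z.1 * cos z.2, z.1 * sin z.2) * sin z.2) with hG₁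
  set G₂ : ℝ × ℝ → ℝ := fun z => F₂ (z.1 * cos z.2, z.1 * sin z.2) * cos z.2
      - F₁ (z.1 * cos z.2, z.1 * sin z.2) * sin z.2 with hG₂
  have key : ∀ q ∈ R, HasFDerivAt G₁ (fderiv ℝ G₁ q) q ∧ HasFDerivAt G₂ (fderiv ℝ G₂ q) q ∧
      fderiv ℝ G₁ q (1, 0) + fderiv ℝ G₂ q (0, 1) = q.1 * g (P q) := by
    intro q hq
    have hPq := hPR q hq
    obtain ⟨L₁, L₂, hL₁, hL₂, hval⟩ := polar_key F₁ F₂ q (hdiff₁ _ hPq) (hdiff₂ _ hPq)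
    have e₁ : fderiv ℝ G₁ q = L₁ := hL₁.fderiv
    have e₂ : fderiv ℝ G₂ q = L₂ := hL₂.fderiv
    refine ⟨e₁ ▸ hL₁, e₂ ▸ hL₂, ?_⟩
    rw [e₁, e₂, hval, hg]
    simp only
    rw [hDW₁ _ hPq, hDW₂ _ hPq]
  have hmapIcc : MapsTo P (Icc ((0:ℝ), -π) (1, π)) K := fun q hq => hPK q hq
  have hG₁cont : ContinuousOn G₁ (Icc ((0:ℝ), -π) (1, π)) := by
    have hF₁P : ContinuousOn (fun z : ℝ × ℝ => F₁ (z.1 * cos z.2, z.1 * sin z.2))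
        (Icc ((0:ℝ), -π) (1, π)) := h₁.continuousOn.comp hPcont.continuousOn hmapIcc
    have hF₂P : ContinuousOn (fun z : ℝ × ℝ => F₂ (z.1 * cos z.2, z.1 * sin z.2))
        (Icc ((0:ℝ), -π) (1, π)) := h₂.continuousOn.comp hPcont.continuousOn hmapIcc
    exact continuousOn_fst.mul
      ((hF₁P.mul (Real.continuous_cos.comp continuous_snd).continuousOn).add
        (hF₂P.mul (Real.continuous_sin.comp continuous_snd).continuousOn))
  have hG₂cont : ContinuousOn G₂ (Icc ((0:ℝ), -π) (1, π)) := by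
    have hF₁P : ContinuousOn (fun z : ℝ × ℝ => F₁ (z.1 * cos z.2, z.1 * sin z.2))
        (Icc ((0:ℝ), -π) (1, π)) := h₁.continuousOn.comp hPcont.continuousOn hmapIcc
    have hF₂P : ContinuousOn (fun z : ℝ × ℝ => F₂ (z.1 * cos z.2, z.1 * sin z.2))
        (Icc ((0:ℝ), -π) (1, π)) := h₂.continuousOn.comp hPcont.continuousOn hmapIcc
    exact (hF₂P.mul (Real.continuous_cos.comp continuous_snd).continuousOn).sub
      (hF₁P.mul (Real.continuous_sin.comp continuous_snd).continuousOn)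
  set h : ℝ × ℝ → ℝ := fun q => q.1 * g (P q) with hh
  have hhcont : ContinuousOn h (Icc ((0:ℝ), -π) (1, π)) :=
    continuousOn_fst.mul (hgK.comp hPcont.continuousOn hmapIcc)
  have hhint : IntegrableOn h (Icc ((0:ℝ), -π) (1, π)) :=
    hhcont.integrableOn_compact isCompact_Icc
  have hRmeas : MeasurableSet R := measurableSet_Ioo.prod measurableSet_Ioo
  have haefun : (fun q => fderiv ℝ G₁ q (1, 0) + fderiv ℝ G₂ q (0, 1))
      =ᵐ[volume.restrict (Icc ((0:ℝ), -π) (1, π))] h := by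
    rw [Measure.restrict_congr_set haeR.symm]
    exact ae_restrict_of_forall_mem hRmeas fun q hq => (key q hq).2.2
  have hint' : IntegrableOn (fun q => fderiv ℝ G₁ q (1, 0) + fderiv ℝ G₂ q (0, 1))
      (Icc ((0:ℝ), -π) (1, π)) := hhint.congr haefun.symm
  have hle : ((0:ℝ), -π) ≤ ((1:ℝ), π) := by
    rw [Prod.le_def]
    constructor
    · norm_num
    · simp only; linarith [pi_pos]
  have hdivthm := integral_divergence_prod_Icc_of_hasFDerivAt_off_countable_of_le
    G₁ G₂ (fun q => fderiv ℝ G₁ q) (fun q => fderiv ℝ G₂ q) ((0:ℝ), -π) ((1:ℝ), π) hle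
    ∅ countable_empty hG₁cont hG₂cont
    (fun x hx => (key x hx.1).1) (fun x hx => (key x hx.1).2.1) hint'
  -- boundary terms vanish
  have hb1 : ∀ x : ℝ, G₂ (x, π) = G₂ (x, -π) := by
    intro x
    simp [hG₂, Real.cos_pi, Real.sin_pi]
  have hb2 : ∀ y : ℝ, G₁ (1, y) = 0 := by
    intro y
    have hcs : ((cos y, sin y) : ℝ × ℝ).1 ^ 2 + ((cos y, sin y) : ℝ × ℝ).2 ^ 2 = 1 := by
      simp only; rw [add_comm]; exact sin_sq_add_cos_sq y
    have hb := hbd (cos y, sin y) hcs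
    simp only [hG₁, one_mul]
    simp only at hb
    linear_combination hb
  have hb3 : ∀ y : ℝ, G₁ (0, y) = 0 := by
    intro y; simp [hG₁]
  have hbndry : (((∫ x in (0:ℝ)..1, G₂ (x, ((1:ℝ), π).2)) - ∫ x in (0:ℝ)..1, G₂ (x, ((0:ℝ), -π).2)) +
      ∫ y in (-π)..π, G₁ (((1:ℝ), π).1, y)) - ∫ y in (-π)..π, G₁ (((0:ℝ), -π).1, y) = 0 := by
    have e1 : (∫ x in (0:ℝ)..1, G₂ (x, ((1:ℝ), π).2)) = ∫ x in (0:ℝ)..1, G₂ (x, ((0:ℝ), -π).2) :=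
      intervalIntegral.integral_congr fun x _ => hb1 x
    have e2 : (∫ y in (-π)..π, G₁ (((1:ℝ), π).1, y)) = 0 := by
      rw [intervalIntegral.integral_congr (g := fun _ => (0:ℝ)) fun y _ => hb2 y]
      simp
    have e3 : (∫ y in (-π)..π, G₁ (((0:ℝ), -π).1, y)) = 0 := by
      rw [intervalIntegral.integral_congr (g := fun _ => (0:ℝ)) fun y _ => hb3 y]
      simp
    rw [e1, e2, e3]; ring
  -- put everything together
  calc ∫ w in Bs, (fderiv ℝ F₁ w (1, 0) + fderiv ℝ F₂ w (0, 1))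
      = ∫ w in Bs, g w := step1
    _ = ∫ q in R, q.1 * g (P q) := step2
    _ = ∫ q in Icc ((0:ℝ), -π) (1, π), h q := setIntegral_congr_set haeR
    _ = ∫ q in Icc ((0:ℝ), -π) (1, π), (fderiv ℝ G₁ q (1, 0) + fderiv ℝ G₂ q (0, 1)) :=
        (integral_congr_ae haefun).symm
    _ = 0 := by rw [hdivthm]; exact hbndry



end AuxiliaryLemmas

open Set Real in
/-- If the torsion field `(T₁,T₂)` is divergence-free in `B` with vanishing
normal component on `∂B`, then for every `φ ∈ C¹(B̄)` the rotated frame has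
total torsion `𝒯(Ñ) = 𝒯(N) + 2∫|∇φ|² ≥ 𝒯(N)`, with equality iff `φ` is
constant. -/
theorem coulomb_frame_minimizes_total_torsion
    (B : Set (ℝ × ℝ)) (hB : B = {p : ℝ × ℝ | p.1 ^ 2 + p.2 ^ 2 < 1})
    (T₁ T₂ φ : ℝ × ℝ → ℝ)
    (hT₁ : ContDiffOn ℝ 1 T₁ (closure B)) (hT₂ : ContDiffOn ℝ 1 T₂ (closure B))
    (hφ : ContDiffOn ℝ 1 φ (closure B))
    (hdiv : ∀ w ∈ B, fderiv ℝ T₁ w (1, 0) + fderiv ℝ T₂ w (0, 1) = 0)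
    (hbd : ∀ w : ℝ × ℝ, w.1 ^ 2 + w.2 ^ 2 = 1 → w.1 * T₁ w + w.2 * T₂ w = 0) :
    ((2 * ∫ w in B, ((T₁ w + fderiv ℝ φ w (1, 0)) ^ 2
          + (T₂ w + fderiv ℝ φ w (0, 1)) ^ 2))
        = (2 * ∫ w in B, ((T₁ w) ^ 2 + (T₂ w) ^ 2))
          + 2 * ∫ w in B, ((fderiv ℝ φ w (1, 0)) ^ 2
              + (fderiv ℝ φ w (0, 1)) ^ 2))
    ∧ ((2 * ∫ w in B, ((T₁ w + fderiv ℝ φ w (1, 0)) ^ 2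
          + (T₂ w + fderiv ℝ φ w (0, 1)) ^ 2))
        ≥ 2 * ∫ w in B, ((T₁ w) ^ 2 + (T₂ w) ^ 2))
    ∧ ((2 * ∫ w in B, ((T₁ w + fderiv ℝ φ w (1, 0)) ^ 2
          + (T₂ w + fderiv ℝ φ w (0, 1)) ^ 2))
        = (2 * ∫ w in B, ((T₁ w) ^ 2 + (T₂ w) ^ 2))
      ↔ ∃ c : ℝ, ∀ w ∈ B, φ w = c) := by
  subst hB
  set Bs : Set (ℝ × ℝ) := {p : ℝ × ℝ | p.1 ^ 2 + p.2 ^ 2 < 1} with hBs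
  set K : Set (ℝ × ℝ) := {p : ℝ × ℝ | p.1 ^ 2 + p.2 ^ 2 ≤ 1} with hK
  rw [show closure Bs = K from closure_disc] at hT₁ hT₂ hφ
  have hBK : Bs ⊆ K := by
    intro p hp
    show p.1 ^ 2 + p.2 ^ 2 ≤ 1
    exact le_of_lt hp
  have hBmeas : MeasurableSet Bs := isOpen_disc.measurableSet
  have hKnhds : ∀ w ∈ Bs, K ∈ nhds w := fun w hw =>
    Filter.mem_of_superset (isOpen_disc.mem_nhds hw) hBK
  have hφd : ∀ w ∈ Bs, DifferentiableAt ℝ φ w := fun w hw =>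
    (hφ.differentiableOn one_ne_zero).differentiableAt (hKnhds w hw)
  have hT₁d : ∀ w ∈ Bs, DifferentiableAt ℝ T₁ w := fun w hw =>
    (hT₁.differentiableOn one_ne_zero).differentiableAt (hKnhds w hw)
  have hT₂d : ∀ w ∈ Bs, DifferentiableAt ℝ T₂ w := fun w hw =>
    (hT₂.differentiableOn one_ne_zero).differentiableAt (hKnhds w hw)
  have hDWφ : ∀ w ∈ Bs, fderivWithin ℝ φ K w = fderiv ℝ φ w := fun w hw =>
    fderivWithin_of_mem_nhds (hKnhds w hw)
  -- continuous surrogates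
  set d1 : ℝ × ℝ → ℝ := fun w => fderivWithin ℝ φ K w (1, 0) with hd1
  set d2 : ℝ × ℝ → ℝ := fun w => fderivWithin ℝ φ K w (0, 1) with hd2
  have hd1c : ContinuousOn d1 K :=
    (hφ.continuousOn_fderivWithin uniqueDiffOn_disc le_rfl).clm_apply continuousOn_const
  have hd2c : ContinuousOn d2 K :=
    (hφ.continuousOn_fderivWithin uniqueDiffOn_disc le_rfl).clm_apply continuousOn_const
  have hT₁c : ContinuousOn T₁ K := hT₁.continuousOn
  have hT₂c : ContinuousOn T₂ K := hT₂.continuousOn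
  -- integrability of the continuous integrands
  have hIo : ∀ f : ℝ × ℝ → ℝ, ContinuousOn f K → IntegrableOn f Bs := fun f hf =>
    (hf.integrableOn_compact compact_disc).mono_set hBK
  have hIA : IntegrableOn (fun w => (T₁ w + d1 w) ^ 2 + (T₂ w + d2 w) ^ 2) Bs :=
    hIo _ (((hT₁c.add hd1c).pow 2).add ((hT₂c.add hd2c).pow 2))
  have hIC : IntegrableOn (fun w => T₁ w ^ 2 + T₂ w ^ 2) Bs :=
    hIo _ ((hT₁c.pow 2).add (hT₂c.pow 2))
  have hID : IntegrableOn (fun w => d1 w ^ 2 + d2 w ^ 2) Bs :=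
    hIo _ ((hd1c.pow 2).add (hd2c.pow 2))
  have hIX : IntegrableOn (fun w => d1 w * T₁ w + d2 w * T₂ w) Bs :=
    hIo _ ((hd1c.mul hT₁c).add (hd2c.mul hT₂c))
  have hIX2 : IntegrableOn (fun w => 2 * (d1 w * T₁ w + d2 w * T₂ w)) Bs :=
    hIo _ (continuousOn_const.mul ((hd1c.mul hT₁c).add (hd2c.mul hT₂c)))
  have hIXD : IntegrableOn (fun w => 2 * (d1 w * T₁ w + d2 w * T₂ w)
      + (d1 w ^ 2 + d2 w ^ 2)) Bs := hIX2.add hID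
  -- replace fderiv by the surrogates in each integral
  have congA : ∫ w in Bs, ((T₁ w + fderiv ℝ φ w (1, 0)) ^ 2 + (T₂ w + fderiv ℝ φ w (0, 1)) ^ 2)
      = ∫ w in Bs, ((T₁ w + d1 w) ^ 2 + (T₂ w + d2 w) ^ 2) := by
    refine setIntegral_congr_fun hBmeas fun w hw => ?_
    simp only [hd1, hd2, hDWφ w hw]
  have congD : ∫ w in Bs, ((fderiv ℝ φ w (1, 0)) ^ 2 + (fderiv ℝ φ w (0, 1)) ^ 2)
      = ∫ w in Bs, (d1 w ^ 2 + d2 w ^ 2) := by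
    refine setIntegral_congr_fun hBmeas fun w hw => ?_
    simp only [hd1, hd2, hDWφ w hw]
  -- cross term is zero
  have hcross : ∫ w in Bs, (d1 w * T₁ w + d2 w * T₂ w) = 0 := by
    have hdt := disc_divergence (fun w => φ w * T₁ w) (fun w => φ w * T₂ w)
      (hφ.mul hT₁) (hφ.mul hT₂)
      (fun w hw => by have := hbd w hw; linear_combination φ w * this)
    rw [← hdt]
    refine setIntegral_congr_fun hBmeas fun w hw => ?_
    have h₁ : HasFDerivAt (fun w => φ w * T₁ w)
        (φ w • fderiv ℝ T₁ w + T₁ w • fderiv ℝ φ w) w :=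
      (hφd w hw).hasFDerivAt.mul (hT₁d w hw).hasFDerivAt
    have h₂ : HasFDerivAt (fun w => φ w * T₂ w)
        (φ w • fderiv ℝ T₂ w + T₂ w • fderiv ℝ φ w) w :=
      (hφd w hw).hasFDerivAt.mul (hT₂d w hw).hasFDerivAt
    rw [h₁.fderiv, h₂.fderiv]
    simp only [ContinuousLinearMap.add_apply, ContinuousLinearMap.smul_apply, smul_eq_mul,
      hd1, hd2, hDWφ w hw]
    have hdw := hdiv w hw
    linear_combination (-φ w) * hdw
  -- main expansion
  have hexp : ∫ w in Bs, ((T₁ w + d1 w) ^ 2 + (T₂ w + d2 w) ^ 2)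
      = (∫ w in Bs, (T₁ w ^ 2 + T₂ w ^ 2)) + (2 * (∫ w in Bs, (d1 w * T₁ w + d2 w * T₂ w))
        + (∫ w in Bs, (d1 w ^ 2 + d2 w ^ 2))) := by
    have e1 : ∀ w, (T₁ w + d1 w) ^ 2 + (T₂ w + d2 w) ^ 2
        = (T₁ w ^ 2 + T₂ w ^ 2) + ((2 * (d1 w * T₁ w + d2 w * T₂ w))
          + (d1 w ^ 2 + d2 w ^ 2)) := fun w => by ring
    rw [integral_congr_ae (Filter.Eventually.of_forall e1)]
    rw [integral_add hIC hIXD, integral_add hIX2 hID, integral_const_mul]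
  have hDnn : 0 ≤ ∫ w in Bs, (d1 w ^ 2 + d2 w ^ 2) :=
    setIntegral_nonneg hBmeas fun w _ => by positivity
  -- the three statements
  have part1 : (2 * ∫ w in Bs, ((T₁ w + fderiv ℝ φ w (1, 0)) ^ 2
        + (T₂ w + fderiv ℝ φ w (0, 1)) ^ 2))
      = (2 * ∫ w in Bs, ((T₁ w) ^ 2 + (T₂ w) ^ 2))
        + 2 * ∫ w in Bs, ((fderiv ℝ φ w (1, 0)) ^ 2 + (fderiv ℝ φ w (0, 1)) ^ 2) := by
    rw [congA, congD, hexp, hcross]; ring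
  refine ⟨part1, ?_, ?_⟩
  · rw [part1, congD]
    linarith
  constructor
  · -- equality → constant
    intro heq
    have hz : ∫ w in Bs, (d1 w ^ 2 + d2 w ^ 2) = 0 := by
      rw [part1, congD] at heq
      linarith
    -- all derivatives vanish on Bs
    have hvanish : ∀ w ∈ Bs, d1 w ^ 2 + d2 w ^ 2 = 0 := by
      by_contra hcon
      push_neg at hcon
      obtain ⟨w₀, hw₀, hne⟩ := hcon
      have hpos : 0 < d1 w₀ ^ 2 + d2 w₀ ^ 2 := lt_of_le_of_ne (by positivity) (Ne.symm hne)
      set c := (d1 w₀ ^ 2 + d2 w₀ ^ 2) / 2 with hc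
      have hcpos : 0 < c := by positivity
      -- find a ball inside Bs where the integrand is ≥ c
      have hcontat : ContinuousAt (fun w => d1 w ^ 2 + d2 w ^ 2) w₀ :=
        (((hd1c.pow 2).add (hd2c.pow 2)).continuousAt (hKnhds w₀ hw₀))
      have hnear : ∀ᶠ w in nhds w₀, c < d1 w ^ 2 + d2 w ^ 2 :=
        continuousAt_const.eventually_lt hcontat (by rw [hc]; linarith)
      obtain ⟨r, hrpos, hball⟩ := Metric.eventually_nhds_iff_ball.1
        (hnear.and (isOpen_disc.eventually_mem hw₀))
      have hb1 : ∫ w in Metric.ball w₀ r, (d1 w ^ 2 + d2 w ^ 2) ≤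
          ∫ w in Bs, (d1 w ^ 2 + d2 w ^ 2) := by
        refine setIntegral_mono_set hID ?_ ?_
        · exact Filter.Eventually.of_forall fun w => by positivity
        · exact HasSubset.Subset.eventuallyLE fun w hw => (hball w hw).2
      have hb2 : c * (volume (Metric.ball w₀ r)).toReal
          ≤ ∫ w in Metric.ball w₀ r, (d1 w ^ 2 + d2 w ^ 2) := by
        have := setIntegral_ge_of_const_le measurableSet_ball
          (measure_ball_lt_top).ne (fun w hw => (hball w hw).1.le)
          (hID.mono_set fun w hw => (hball w hw).2)
        rw [smul_eq_mul, mul_comm] at this; exact this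
      have hvol : 0 < (volume (Metric.ball w₀ r)).toReal := by
        refine ENNReal.toReal_pos (Metric.measure_ball_pos volume w₀ hrpos).ne' measure_ball_lt_top.ne
      nlinarith
    have hfz : ∀ w ∈ Bs, fderiv ℝ φ w = 0 := by
      intro w hw
      have h0 := hvanish w hw
      have h1 : d1 w = 0 := by nlinarith [sq_nonneg (d1 w), sq_nonneg (d2 w)]
      have h2 : d2 w = 0 := by nlinarith [sq_nonneg (d1 w), sq_nonneg (d2 w)]
      have h1' : fderiv ℝ φ w (1, 0) = 0 := by rw [← hDWφ w hw]; exact h1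
      have h2' : fderiv ℝ φ w (0, 1) = 0 := by rw [← hDWφ w hw]; exact h2
      refine ContinuousLinearMap.ext fun v => ?_
      have hv : fderiv ℝ φ w v = v.1 * fderiv ℝ φ w (1, 0) + v.2 * fderiv ℝ φ w (0, 1) := by
        conv_lhs => rw [show v = (v.1, v.2) from rfl]
        rw [clm_pair]
      rw [hv, h1', h2']
      simp
    -- constancy on the convex set Bs
    have h00 : ((0:ℝ), (0:ℝ)) ∈ Bs := by norm_num [hBs]
    refine ⟨φ (0, 0), fun w hw => ?_⟩
    have := convex_disc_lt.norm_image_sub_le_of_norm_hasFDerivWithin_le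
      (f := φ) (f' := fun _ => 0) (C := 0)
      (fun x hx => by
        have hthis : HasFDerivWithinAt φ (fderiv ℝ φ x)
            {p : ℝ × ℝ | p.1 ^ 2 + p.2 ^ 2 < 1} x :=
          (hφd x hx).hasFDerivAt.hasFDerivWithinAt
        rw [hfz x hx] at hthis
        exact hthis)
      (fun x _ => by simp) h00 hw
    simp only [norm_zero, zero_mul] at this
    have : ‖φ w - φ (0, 0)‖ ≤ 0 := by simpa using this
    have := norm_le_zero_iff.1 this
    linarith [sub_eq_zero.1 this]
  · -- constant → equality
    rintro ⟨c, hconst⟩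
    have hfz : ∀ w ∈ Bs, fderiv ℝ φ w = 0 := by
      intro w hw
      have heq : φ =ᶠ[nhds w] fun _ => c :=
        Filter.eventuallyEq_of_mem (isOpen_disc.mem_nhds hw) fun x hx => hconst x hx
      rw [heq.fderiv_eq, fderiv_fun_const]
      rfl
    have hz : ∫ w in Bs, ((fderiv ℝ φ w (1, 0)) ^ 2 + (fderiv ℝ φ w (0, 1)) ^ 2) = 0 := by
      rw [setIntegral_congr_fun hBmeas (g := fun _ => (0:ℝ)) fun w hw => by
        rw [hfz w hw]; simp]
      simp
    rw [part1, hz]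
    ring
end

section
/- For the Green's function of the Laplacian on the unit disc, the integral of its absolute value is (1-|w|²)/4: for Φ(ζ;w) = (1/2π) log|(ζ-w)/(1-w̄ζ)|, one has ∫∫_B |Φ(ζ;w)| dξdη = (1-|w|²)/4 ≤ 1/4 for each w ∈ B. -/
open MeasureTheory
open Real Set intervalIntegral

namespace Complex

/-- the complex absolute value, as a bundled absolute value (port helper) -/
noncomputable def abs : AbsoluteValue ℂ ℝ where
  toFun := fun z => ‖z‖
  map_mul' := norm_mul
  nonneg' := norm_nonneg
  eq_zero' := fun _ => norm_eq_zero
  add_le' := norm_add_le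

theorem norm_eq_abs (z : ℂ) : ‖z‖ = abs z := rfl

@[simp] theorem abs_exp (z : ℂ) : abs (exp z) = Real.exp z.re := norm_exp z

@[simp] theorem abs_exp_ofReal_mul_I (x : ℝ) : abs (exp (x * I)) = 1 := norm_exp_ofReal_mul_I x

@[simp] theorem abs_ofReal (r : ℝ) : abs r = |r| := norm_real r

@[simp] theorem abs_conj (z : ℂ) : abs (starRingEnd ℂ z) = abs z := norm_conj z

theorem re_le_abs (z : ℂ) : z.re ≤ abs z := re_le_norm z

theorem continuous_abs : Continuous abs := continuous_norm

theorem abs_apply (z : ℂ) : abs z = Real.sqrt (normSq z) := norm_def z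

theorem sq_abs (z : ℂ) : abs z ^ 2 = normSq z := Complex.sq_norm z

theorem polarCoord_symm_abs (p : ℝ × ℝ) : abs (Complex.polarCoord.symm p) = |p.1| :=
  norm_polarCoord_symm p

theorem abs.pos {z : ℂ} (h : z ≠ 0) : 0 < abs z := norm_pos_iff.mpr h

end Complex


lemma circle_avg_log_one_sub (a : ℂ) (ha : Complex.abs a < 1) :
    ∫ θ in (0:ℝ)..(2*π), Real.log (Complex.abs (1 - a * Complex.exp (θ * Complex.I))) = 0 := by
  set f : ℂ → ℂ := fun z => Complex.log (1 - a * z) with hf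
  have hslit : ∀ z : ℂ, z ∈ Metric.closedBall (0:ℂ) 1 → (1 - a * z) ∈ Complex.slitPlane := by
    intro z hz
    simp only [Metric.mem_closedBall, dist_zero_right] at hz
    left
    have h1 : Complex.abs (a * z) < 1 := by
      rw [map_mul]
      calc Complex.abs a * Complex.abs z ≤ Complex.abs a * 1 :=
            mul_le_mul_of_nonneg_left (by exact hz) (Complex.abs.nonneg a)
        _ < 1 := by simpa using ha
    have h2 : (a*z).re ≤ Complex.abs (a*z) := Complex.re_le_abs _
    simp only [Complex.sub_re, Complex.one_re]
    linarith
  have hdiff : DifferentiableOn ℂ f (Metric.closedBall (0:ℂ) 1) := by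
    intro z hz
    exact ((Complex.differentiableAt_log (hslit z hz)).comp (f := fun z : ℂ => 1 - a * z) z
      (by fun_prop)).differentiableWithinAt
  have key := hdiff.circleIntegral_sub_inv_smul (Metric.mem_ball_self one_pos)
  have hf0 : f 0 = 0 := by simp [hf]
  rw [hf0, smul_zero] at key
  -- unfold circle integral
  rw [circleIntegral] at key
  simp only [deriv_circleMap, circleMap, Complex.ofReal_one, zero_add, one_mul, sub_zero,
    smul_eq_mul] at key
  have hexp : ∀ θ : ℝ, Complex.exp (θ * Complex.I) ≠ 0 := fun θ => Complex.exp_ne_zero _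
  have key2 : (∫ θ in (0:ℝ)..(2*π), Complex.I * f (Complex.exp (θ * Complex.I))) = 0 := by
    rw [← key]
    apply intervalIntegral.integral_congr
    intro θ _
    field_simp
  rw [intervalIntegral.integral_const_mul] at key2
  have key3 : (∫ θ in (0:ℝ)..(2*π), f (Complex.exp (θ * Complex.I))) = 0 := by
    rcases mul_eq_zero.1 key2 with h | h
    · exact absurd h Complex.I_ne_zero
    · exact h
  have hcont : Continuous fun θ : ℝ => f (Complex.exp (θ * Complex.I)) := by
    rw [continuous_iff_continuousAt]
    intro θ
    have : (1 - a * Complex.exp (θ * Complex.I)) ∈ Complex.slitPlane :=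
      hslit _ (by simp [Complex.abs_exp])
    have hc2 : ContinuousAt (fun θ : ℝ => (1 - a * Complex.exp (θ * Complex.I))) θ := by
      fun_prop
    show ContinuousAt (Complex.log ∘ (fun θ : ℝ => 1 - a * Complex.exp (θ * Complex.I))) θ
    exact ContinuousAt.comp (x := θ) (continuousAt_clog this) hc2
  have hlogre : ∀ θ : ℝ, Real.log (Complex.abs (1 - a * Complex.exp (θ * Complex.I)))
      = (f (Complex.exp (θ * Complex.I))).re := fun θ => (Complex.log_re _).symm
  simp_rw [hlogre]
  have h0 : (0:ℝ) ≤ 2*π := by positivity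
  rw [intervalIntegral.integral_of_le h0] at key3 ⊢
  have hInt : IntegrableOn (fun θ : ℝ => f (Complex.exp (θ * Complex.I))) (Ioc 0 (2*π)) :=
    hcont.integrableOn_Ioc
  have h4 := integral_re hInt
  rw [key3] at h4
  exact h4


lemma one_sub_pos_abs (a : ℂ) (ha : Complex.abs a < 1) (θ : ℝ) :
    0 < Complex.abs (1 - a * Complex.exp (θ * Complex.I)) := by
  have h1 : Complex.abs (a * Complex.exp (θ * Complex.I)) < 1 := by
    rw [map_mul, Complex.abs_exp]
    simpa using ha
  have : (1 : ℂ) - a * Complex.exp (θ * Complex.I) ≠ 0 := by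
    intro h
    rw [sub_eq_zero] at h
    rw [← h] at h1
    simp at h1
  simpa [Complex.abs.pos_iff] using this

lemma cont_log_one_sub (a : ℂ) (ha : Complex.abs a < 1) :
    Continuous fun θ : ℝ => Real.log (Complex.abs (1 - a * Complex.exp (θ * Complex.I))) := by
  rw [continuous_iff_continuousAt]
  intro θ
  have h2 : ContinuousAt (fun θ : ℝ => Complex.abs (1 - a * Complex.exp (θ * Complex.I))) θ := by
    apply Continuous.continuousAt
    apply Complex.continuous_abs.comp
    fun_prop
  exact ContinuousAt.comp (x := θ) (Real.continuousAt_log (one_sub_pos_abs a ha θ).ne') h2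

lemma avg_Ioo (a : ℂ) (ha : Complex.abs a < 1) :
    ∫ θ in Ioo (-π) π, Real.log (Complex.abs (1 - a * Complex.exp (θ * Complex.I))) = 0 := by
  have hper : Function.Periodic
      (fun θ : ℝ => Real.log (Complex.abs (1 - a * Complex.exp (θ * Complex.I)))) (2*π) := by
    intro θ
    simp only []
    congr 3
    push_cast
    rw [add_mul, Complex.exp_add]
    simp [Complex.exp_two_pi_mul_I]
  have h1 := hper.intervalIntegral_add_eq (-π) 0
  rw [zero_add] at h1
  have h2 : -π + 2*π = π := by ring
  rw [h2] at h1
  rw [← integral_Ioc_eq_integral_Ioo, ← intervalIntegral.integral_of_le (by linarith [pi_pos] : -π ≤ π)]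
  rw [h1]
  exact circle_avg_log_one_sub a ha

lemma avg_Ioo_scaled (a : ℂ) (ha : Complex.abs a < 1) (s : ℝ) (hs : 0 < s) (F : ℝ → ℝ)
    (hF : ∀ θ, F θ = Real.log (s * Complex.abs (1 - a * Complex.exp (θ * Complex.I)))) :
    ∫ θ in Ioo (-π) π, F θ = 2 * π * Real.log s := by
  have hFs : ∀ θ, F θ = Real.log s
      + Real.log (Complex.abs (1 - a * Complex.exp (θ * Complex.I))) := by
    intro θ
    rw [hF θ, Real.log_mul hs.ne' (one_sub_pos_abs a ha θ).ne']
  simp_rw [hFs]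
  have hi1 : IntegrableOn (fun _ : ℝ => Real.log s) (Ioo (-π) π) volume :=
    integrableOn_const (by rw [Real.volume_Ioo]; exact ENNReal.ofReal_ne_top)
  have hi2 : IntegrableOn
      (fun θ : ℝ => Real.log (Complex.abs (1 - a * Complex.exp (θ * Complex.I))))
      (Ioo (-π) π) volume :=
    ((cont_log_one_sub a ha).integrableOn_Ioc).mono_set Set.Ioo_subset_Ioc_self
  rw [MeasureTheory.integral_add hi1 hi2, avg_Ioo a ha, add_zero,
      setIntegral_const, measureReal_def, Real.volume_Ioo, smul_eq_mul,
      ENNReal.toReal_ofReal (by linarith [pi_pos] : (0:ℝ) ≤ π - -π)]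
  ring


lemma integrable_scaled (a : ℂ) (ha : Complex.abs a < 1) (s : ℝ) (hs : 0 < s) (F : ℝ → ℝ)
    (hF : ∀ θ, F θ = Real.log (s * Complex.abs (1 - a * Complex.exp (θ * Complex.I)))) :
    IntegrableOn F (Ioo (-π) π) volume := by
  have hcont : Continuous F := by
    have := cont_log_one_sub a ha
    have h2 : ∀ θ, F θ = Real.log s
        + Real.log (Complex.abs (1 - a * Complex.exp (θ * Complex.I))) := fun θ => by
      rw [hF θ, Real.log_mul hs.ne' (one_sub_pos_abs a ha θ).ne']
    simp_rw [funext h2]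
    fun_prop
  exact (hcont.integrableOn_Ioc).mono_set Set.Ioo_subset_Ioc_self

lemma abs_scaled_big (w : ℂ) (r : ℝ) (hr0 : 0 < r) (hbig : Complex.abs w < r) (θ : ℝ) :
    Complex.abs ((r:ℂ) * Complex.exp (θ * Complex.I) - w)
      = r * Complex.abs (1 - ((starRingEnd ℂ) w / r) * Complex.exp (θ * Complex.I)) := by
  have hinv : Complex.exp (θ * Complex.I) * Complex.exp (-(θ * Complex.I)) = 1 := by
    rw [← Complex.exp_add]; simp
  have e1 : (r:ℂ) * Complex.exp (θ * Complex.I) - w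
      = Complex.exp (θ * Complex.I) * ((r:ℂ) - w * Complex.exp (-(θ * Complex.I))) := by
    have : Complex.exp (θ * Complex.I) * ((r:ℂ) - w * Complex.exp (-(θ * Complex.I)))
        = (r:ℂ) * Complex.exp (θ * Complex.I)
          - w * (Complex.exp (θ * Complex.I) * Complex.exp (-(θ * Complex.I))) := by ring
    rw [this, hinv, mul_one]
  have e2 : (starRingEnd ℂ) ((r:ℂ) - w * Complex.exp (-(θ * Complex.I)))
      = (r:ℂ) - (starRingEnd ℂ) w * Complex.exp (θ * Complex.I) := by
    rw [map_sub, map_mul, Complex.conj_ofReal, ← Complex.exp_conj]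
    congr 2
    simp [Complex.conj_I]
  have e3 : (r:ℂ) - (starRingEnd ℂ) w * Complex.exp (θ * Complex.I)
      = (r:ℂ) * (1 - ((starRingEnd ℂ) w / r) * Complex.exp (θ * Complex.I)) := by
    have : (r:ℂ) ≠ 0 := Complex.ofReal_ne_zero.2 hr0.ne'
    field_simp
  rw [e1, map_mul, Complex.abs_exp]
  norm_num
  rw [← Complex.abs_conj, e2, e3, map_mul, Complex.abs_ofReal, abs_of_pos hr0]

lemma abs_scaled_small (w : ℂ) (r : ℝ) (hr0 : 0 < r) (hsmall : r < Complex.abs w) (θ : ℝ) :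
    Complex.abs ((r:ℂ) * Complex.exp (θ * Complex.I) - w)
      = Complex.abs w * Complex.abs (1 - ((r:ℂ) / w) * Complex.exp (θ * Complex.I)) := by
  have hw0 : w ≠ 0 := by
    intro h; rw [h] at hsmall; simp at hsmall; linarith
  have e1 : (r:ℂ) * Complex.exp (θ * Complex.I) - w
      = (-w) * (1 - ((r:ℂ) / w) * Complex.exp (θ * Complex.I)) := by
    field_simp
    ring
  rw [e1, map_mul, map_neg_eq_map]


/-- the first slice function -/
noncomputable def F1 (w : ℂ) (r : ℝ) : ℝ → ℝ := fun θ =>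
  Real.log (Complex.abs ((r:ℂ) * Complex.exp (θ * Complex.I) - w))

/-- the second slice function -/
noncomputable def F2 (w : ℂ) (r : ℝ) : ℝ → ℝ := fun θ =>
  Real.log (Complex.abs (1 - (starRingEnd ℂ) w * ((r:ℂ) * Complex.exp (θ * Complex.I))))

section Slice
variable {w : ℂ} {r : ℝ}

lemma F1_integral (hw : Complex.abs w < 1) (hr0 : 0 < r) (hr1 : r < 1) (hra : r ≠ Complex.abs w) :
    ∫ θ in Ioo (-π) π, F1 w r θ = 2 * π * Real.log (max r (Complex.abs w)) := by
  rcases hra.lt_or_gt with h | h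
  · -- r < |w|
    rw [max_eq_right h.le]
    have hw0 : (0:ℝ) < Complex.abs w := lt_trans hr0 h
    have ha : Complex.abs ((r:ℂ) / w) < 1 := by
      rw [map_div₀, Complex.abs_ofReal, abs_of_pos hr0]
      rw [div_lt_one hw0]; exact h
    exact avg_Ioo_scaled _ ha _ hw0 _ (fun θ => congrArg Real.log (abs_scaled_small w r hr0 h θ))
  · rw [max_eq_left h.le]
    have ha : Complex.abs ((starRingEnd ℂ) w / r) < 1 := by
      rw [map_div₀, Complex.abs_conj, Complex.abs_ofReal, abs_of_pos hr0, div_lt_one hr0]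
      exact h
    exact avg_Ioo_scaled _ ha _ hr0 _ (fun θ => congrArg Real.log (abs_scaled_big w r hr0 h θ))

lemma F1_integrable (hw : Complex.abs w < 1) (hr0 : 0 < r) (hr1 : r < 1) (hra : r ≠ Complex.abs w) :
    IntegrableOn (F1 w r) (Ioo (-π) π) volume := by
  rcases hra.lt_or_gt with h | h
  · have hw0 : (0:ℝ) < Complex.abs w := lt_trans hr0 h
    have ha : Complex.abs ((r:ℂ) / w) < 1 := by
      rw [map_div₀, Complex.abs_ofReal, abs_of_pos hr0, div_lt_one hw0]; exact h
    exact integrable_scaled _ ha _ hw0 _ (fun θ => congrArg Real.log (abs_scaled_small w r hr0 h θ))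
  · have ha : Complex.abs ((starRingEnd ℂ) w / r) < 1 := by
      rw [map_div₀, Complex.abs_conj, Complex.abs_ofReal, abs_of_pos hr0, div_lt_one hr0]
      exact h
    exact integrable_scaled _ ha _ hr0 _ (fun θ => congrArg Real.log (abs_scaled_big w r hr0 h θ))

lemma F2_rw (w : ℂ) (r : ℝ) : F2 w r = fun θ : ℝ =>
    Real.log (Complex.abs (1 - ((starRingEnd ℂ) w * r) * Complex.exp (θ * Complex.I))) := by
  funext θ
  simp only [F2, mul_assoc]

lemma F2_a_lt (hw : Complex.abs w < 1) (hr0 : 0 < r) (hr1 : r < 1) : Complex.abs ((starRingEnd ℂ) w * r) < 1 := by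
  rw [map_mul, Complex.abs_conj, Complex.abs_ofReal, abs_of_pos hr0]
  nlinarith [Complex.abs.nonneg w, hr0.le, hw, hr1]

lemma F2_integral (hw : Complex.abs w < 1) (hr0 : 0 < r) (hr1 : r < 1) : ∫ θ in Ioo (-π) π, F2 w r θ = 0 := by
  rw [F2_rw]
  exact avg_Ioo _ (F2_a_lt hw hr0 hr1)

lemma F2_integrable (hw : Complex.abs w < 1) (hr0 : 0 < r) (hr1 : r < 1) : IntegrableOn (F2 w r) (Ioo (-π) π) volume := by
  rw [F2_rw]
  exact ((cont_log_one_sub _ (F2_a_lt hw hr0 hr1)).integrableOn_Ioc).mono_set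
    Set.Ioo_subset_Ioc_self

lemma slice_integral (hw : Complex.abs w < 1) (hr0 : 0 < r) (hr1 : r < 1) (hra : r ≠ Complex.abs w) :
    ∫ θ in Ioo (-π) π, (F1 w r θ - F2 w r θ)
      = 2 * π * Real.log (max r (Complex.abs w)) := by
  rw [MeasureTheory.integral_sub (F1_integrable hw hr0 hr1 hra)
      (F2_integrable hw hr0 hr1), F1_integral hw hr0 hr1 hra,
      F2_integral hw hr0 hr1, sub_zero]

lemma slice_integrable (hw : Complex.abs w < 1) (hr0 : 0 < r) (hr1 : r < 1) (hra : r ≠ Complex.abs w) :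
    IntegrableOn (fun θ => F1 w r θ - F2 w r θ) (Ioo (-π) π) volume :=
  (F1_integrable hw hr0 hr1 hra).sub (F2_integrable hw hr0 hr1)

lemma F2_ptwise_bound (hw : Complex.abs w < 1) (hr0 : 0 < r) (hr1 : r < 1) :
    ∀ θ, |F2 w r θ| ≤ Real.log 2 + |Real.log (1 - Complex.abs w)| := by
  intro θ
  have hw0 : (0:ℝ) ≤ Complex.abs w := Complex.abs.nonneg w
  set x := Complex.abs (1 - (starRingEnd ℂ) w * ((r:ℂ) * Complex.exp (θ * Complex.I))) with hx
  have habs : Complex.abs ((starRingEnd ℂ) w * ((r:ℂ) * Complex.exp (θ * Complex.I)))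
      = Complex.abs w * r := by
    rw [map_mul, map_mul, Complex.abs_conj, Complex.abs_ofReal, abs_of_pos hr0,
      Complex.abs_exp]
    norm_num
  have hxlb : 1 - Complex.abs w ≤ x := by
    have h1 := Complex.abs.le_sub (1:ℂ)
      ((starRingEnd ℂ) w * ((r:ℂ) * Complex.exp (θ * Complex.I)))
    rw [habs, map_one, ← hx] at h1
    nlinarith
  have hxub : x ≤ 2 := by
    have h1 := Complex.abs.sub_le_add (1:ℂ)
      ((starRingEnd ℂ) w * ((r:ℂ) * Complex.exp (θ * Complex.I)))
    rw [habs, map_one, ← hx] at h1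
    nlinarith
  have hxpos : 0 < x := lt_of_lt_of_le (by linarith) hxlb
  have hgoal : F2 w r θ = Real.log x := rfl
  rw [hgoal]
  rcases le_total x 1 with h | h
  · rw [abs_of_nonpos (Real.log_nonpos hxpos.le h)]
    have h1 : Real.log (1 - Complex.abs w) ≤ Real.log x := Real.log_le_log (by linarith) hxlb
    have h2 : -Real.log (1 - Complex.abs w) ≤ |Real.log (1 - Complex.abs w)| := neg_le_abs _
    have h3 : (0:ℝ) ≤ Real.log 2 := Real.log_nonneg one_le_two
    linarith
  · rw [abs_of_nonneg (Real.log_nonneg h)]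
    have h1 : Real.log x ≤ Real.log 2 := Real.log_le_log hxpos hxub
    have h2 : (0:ℝ) ≤ |Real.log (1 - Complex.abs w)| := abs_nonneg _
    linarith

lemma F1_ptwise_bound (hw : Complex.abs w < 1) (hr0 : 0 < r) (hr1 : r < 1)
    (hra : r ≠ Complex.abs w) :
    ∀ θ, |F1 w r θ| ≤ 2 * Real.log 2 - F1 w r θ := by
  intro θ
  set x := Complex.abs ((r:ℂ) * Complex.exp (θ * Complex.I) - w) with hx
  have habs : Complex.abs ((r:ℂ) * Complex.exp (θ * Complex.I)) = r := by
    rw [map_mul, Complex.abs_ofReal, Complex.abs_exp, abs_of_pos hr0]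
    norm_num
  have hxpos : 0 < x := by
    rcases eq_or_lt_of_le (Complex.abs.nonneg ((r:ℂ) * Complex.exp (θ * Complex.I) - w)) with h | h
    · exfalso
      apply hra
      have h0 : (r:ℂ) * Complex.exp (θ * Complex.I) - w = 0 := by
        simpa using (Complex.abs.eq_zero.1 h.symm)
      have h1 : (r:ℂ) * Complex.exp (θ * Complex.I) = w := sub_eq_zero.1 h0
      rw [← h1, habs]
    · exact h
  have hxub : x ≤ 2 := by
    have h1 := Complex.abs.sub_le_add ((r:ℂ) * Complex.exp (θ * Complex.I)) w
    rw [habs, ← hx] at h1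
    linarith [hw]
  have hgoal : F1 w r θ = Real.log x := rfl
  rw [hgoal]
  have hlog2 : (0:ℝ) ≤ Real.log 2 := Real.log_nonneg one_le_two
  rcases le_total x 1 with h | h
  · rw [abs_of_nonpos (Real.log_nonpos hxpos.le h)]
    linarith
  · rw [abs_of_nonneg (Real.log_nonneg h)]
    have h1 : Real.log x ≤ Real.log 2 := Real.log_le_log hxpos hxub
    linarith

lemma slice_abs_bound (hw : Complex.abs w < 1) (hr0 : 0 < r) (hr1 : r < 1)
    (hra : r ≠ Complex.abs w) :
    ∫ θ in Ioo (-π) π, |F2 w r θ - F1 w r θ|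
      ≤ 2 * π * (3 * Real.log 2 + |Real.log (1 - Complex.abs w)|) - 2 * π * Real.log r := by
  set C2 := Real.log 2 + |Real.log (1 - Complex.abs w)| with hC2
  have hpt : ∀ θ ∈ Ioo (-π) π, |F2 w r θ - F1 w r θ|
      ≤ (2 * Real.log 2 + C2) - F1 w r θ := by
    intro θ _
    have h1 := F1_ptwise_bound hw hr0 hr1 hra θ
    have h2 := F2_ptwise_bound hw hr0 hr1 θ
    calc |F2 w r θ - F1 w r θ| ≤ |F2 w r θ| + |F1 w r θ| := abs_sub _ _
      _ ≤ (2 * Real.log 2 + C2) - F1 w r θ := by rw [hC2]; linarith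
  have hconst : IntegrableOn (fun _ : ℝ => 2 * Real.log 2 + C2) (Ioo (-π) π) volume :=
    integrableOn_const (by rw [Real.volume_Ioo]; exact ENNReal.ofReal_ne_top)
  have hF1i := F1_integrable hw hr0 hr1 hra
  have hRHSi : IntegrableOn (fun θ => (2 * Real.log 2 + C2) - F1 w r θ) (Ioo (-π) π) volume :=
    hconst.sub hF1i
  have hLHSi : IntegrableOn (fun θ => |F2 w r θ - F1 w r θ|) (Ioo (-π) π) volume :=
    ((F2_integrable hw hr0 hr1).sub hF1i).abs
  have hmono := setIntegral_mono_on hLHSi hRHSi measurableSet_Ioo hpt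
  have hval : ∫ θ in Ioo (-π) π, ((2 * Real.log 2 + C2) - F1 w r θ)
      = (2 * π) * (2 * Real.log 2 + C2) - 2 * π * Real.log (max r (Complex.abs w)) := by
    rw [MeasureTheory.integral_sub hconst hF1i, F1_integral hw hr0 hr1 hra,
      setIntegral_const, measureReal_def, Real.volume_Ioo, smul_eq_mul,
      ENNReal.toReal_ofReal (by linarith [pi_pos] : (0:ℝ) ≤ π - -π)]
    ring_nf
  have hlogmax : Real.log r ≤ Real.log (max r (Complex.abs w)) :=
    Real.log_le_log hr0 (le_max_left _ _)
  have hpi := pi_pos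
  calc ∫ θ in Ioo (-π) π, |F2 w r θ - F1 w r θ|
      ≤ (2 * π) * (2 * Real.log 2 + C2) - 2 * π * Real.log (max r (Complex.abs w)) := by
        rw [← hval]; exact hmono
    _ ≤ 2 * π * (3 * Real.log 2 + |Real.log (1 - Complex.abs w)|) - 2 * π * Real.log r := by
        rw [hC2]; nlinarith

end Slice


lemma hasDerivAt_prim (r : ℝ) (hr : 0 < r) :
    HasDerivAt (fun x : ℝ => x ^ 2 * Real.log x / 2 - x ^ 2 / 4) (r * Real.log r) r := by
  have h1 : HasDerivAt (fun x : ℝ => x ^ 2 * Real.log x)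
      ((2:ℕ) * r ^ (2-1) * Real.log r + r ^ 2 * r⁻¹) r :=
    (hasDerivAt_pow 2 r).mul (Real.hasDerivAt_log hr.ne')
  have h2 : HasDerivAt (fun x : ℝ => x ^ 2 * Real.log x / 2 - x ^ 2 / 4) _ r := (h1.div_const 2).sub ((hasDerivAt_pow 2 r).div_const 4)
  convert h2 using 1
  field_simp
  ring

lemma radial_integral (a : ℝ) (ha0 : 0 ≤ a) (ha1 : a < 1) :
    ∫ r in Ioo (0:ℝ) 1, r * Real.log (max r a) = (a ^ 2 - 1) / 4 := by
  have hcml : Continuous fun x : ℝ => x ^ 2 * Real.log x / 2 - x ^ 2 / 4 := by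
    have : (fun x : ℝ => x ^ 2 * Real.log x / 2 - x ^ 2 / 4)
        = fun x : ℝ => x * (x * Real.log x) / 2 - x ^ 2 / 4 := by
      funext x; ring
    rw [this]
    exact ((continuous_id.mul Real.continuous_mul_log).div_const 2).sub
      ((continuous_pow 2).div_const 4)
  have key : ∀ b : ℝ, a ≤ b → b ≤ 1 → (∫ r in a..b, r * Real.log r)
      = (b ^ 2 * Real.log b / 2 - b ^ 2 / 4) - (a ^ 2 * Real.log a / 2 - a ^ 2 / 4) := by
    intro b hab hb1
    apply intervalIntegral.integral_eq_sub_of_hasDeriv_right_of_le hab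
      (hcml.continuousOn)
    · intro x hx
      exact (hasDerivAt_prim x (lt_of_le_of_lt ha0 hx.1)).hasDerivWithinAt
    · have : Continuous fun x : ℝ => x * Real.log x := Real.continuous_mul_log
      exact this.intervalIntegrable a b
  rcases eq_or_lt_of_le ha0 with rfl | hapos
  · have hcongr : ∀ r ∈ Ioo (0:ℝ) 1, r * Real.log (max r 0) = r * Real.log r := by
      intro r hr
      rw [max_eq_left hr.1.le]
    rw [setIntegral_congr_fun measurableSet_Ioo hcongr, ← integral_Ioc_eq_integral_Ioo,
      ← intervalIntegral.integral_of_le zero_le_one, key 1 zero_le_one le_rfl]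
    norm_num
  · have hfc : Continuous fun r : ℝ => Real.log (max r a) := by
      rw [continuous_iff_continuousAt]
      intro x
      have hmax : ContinuousAt (fun r : ℝ => max r a) x :=
        (continuous_id.max continuous_const).continuousAt
      have hpos : (0:ℝ) < max x a := lt_of_lt_of_le hapos (le_max_right x a)
      exact ContinuousAt.comp (x := x) (Real.continuousAt_log hpos.ne') hmax
    have hint : Continuous fun r : ℝ => r * Real.log (max r a) := continuous_id.mul hfc
    rw [← integral_Ioc_eq_integral_Ioo, ← intervalIntegral.integral_of_le zero_le_one,
      ← intervalIntegral.integral_add_adjacent_intervals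
        (hint.intervalIntegrable 0 a) (hint.intervalIntegrable a 1)]
    have e1 : (∫ r in (0:ℝ)..a, r * Real.log (max r a)) = ∫ r in (0:ℝ)..a, r * Real.log a := by
      apply intervalIntegral.integral_congr
      intro r hr
      rw [Set.uIcc_of_le ha0] at hr
      simp only []
      rw [max_eq_right hr.2]
    have e2 : (∫ r in a..(1:ℝ), r * Real.log (max r a)) = ∫ r in a..(1:ℝ), r * Real.log r := by
      apply intervalIntegral.integral_congr
      intro r hr
      rw [Set.uIcc_of_le ha1.le] at hr
      simp only []
      rw [max_eq_left hr.1]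
    rw [e1, e2, intervalIntegral.integral_mul_const, integral_id,
      key 1 ha1.le le_rfl]
    norm_num
    ring


lemma psi_eq (p : ℝ × ℝ) :
    Complex.polarCoord.symm p = (p.1 : ℂ) * Complex.exp (p.2 * Complex.I) := by
  rw [Complex.polarCoord_symm_apply, Complex.exp_mul_I]
  norm_num [Complex.ofReal_cos, Complex.ofReal_sin]

/-- Green integrand (up to `-1/2π`), extended by zero outside the ball. -/
noncomputable def G (w : ℂ) : ℂ → ℝ :=
  (Metric.ball (0:ℂ) 1).indicator fun ζ =>
    Real.log (Complex.abs (1 - (starRingEnd ℂ) w * ζ)) - Real.log (Complex.abs (ζ - w))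

lemma G_meas (w : ℂ) : Measurable (G w) := by
  apply Measurable.indicator _ measurableSet_ball
  apply Measurable.sub
  · exact Real.measurable_log.comp (Complex.continuous_abs.measurable.comp
      ((continuous_const.sub (continuous_const.mul continuous_id)).measurable))
  · exact Real.measurable_log.comp (Complex.continuous_abs.measurable.comp
      ((continuous_id.sub continuous_const).measurable))

lemma G_slice_lt (w : ℂ) (r : ℝ) (hr0 : 0 < r) (hr1 : r < 1) (θ : ℝ) :
    G w (Complex.polarCoord.symm (r, θ)) = F2 w r θ - F1 w r θ := by
  have hmem : Complex.polarCoord.symm (r, θ) ∈ Metric.ball (0:ℂ) 1 := by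
    rw [Metric.mem_ball, dist_zero_right, Complex.norm_eq_abs, Complex.polarCoord_symm_abs]
    rwa [abs_of_pos hr0]
  rw [psi_eq] at hmem
  simp only [G]
  rw [psi_eq, Set.indicator_of_mem hmem]
  rfl

lemma G_slice_ge (w : ℂ) (r : ℝ) (hr1 : 1 ≤ r) (θ : ℝ) :
    G w (Complex.polarCoord.symm (r, θ)) = 0 := by
  have hnm : Complex.polarCoord.symm (r, θ) ∉ Metric.ball (0:ℂ) 1 := by
    rw [Metric.mem_ball, dist_zero_right, Complex.norm_eq_abs, Complex.polarCoord_symm_abs,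
      abs_of_pos (by linarith : (0:ℝ) < r)]
    exact not_lt.2 hr1
  simp only [G, Set.indicator_of_notMem hnm]

lemma hane (w : ℂ) : ∀ᵐ r ∂(volume.restrict (Ioi (0:ℝ))), r ≠ Complex.abs w := by
  apply ae_restrict_of_ae
  rw [ae_iff]
  have : {x : ℝ | ¬ x ≠ Complex.abs w} = {Complex.abs w} := by ext x; simp
  rw [this]
  exact measure_singleton _

lemma key_integrable (w : ℂ) (hw : Complex.abs w < 1) :
    Integrable (fun p : ℝ × ℝ => p.1 • G w (Complex.polarCoord.symm p))
      ((volume.restrict (Ioi (0:ℝ))).prod (volume.restrict (Ioo (-π) π))) := by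
  have hψ : Continuous fun p : ℝ × ℝ => Complex.polarCoord.symm p := by
    simp only [Complex.polarCoord_symm_apply]
    fun_prop
  have hmeasf : Measurable fun p : ℝ × ℝ => p.1 • G w (Complex.polarCoord.symm p) :=
    measurable_fst.smul ((G_meas w).comp hψ.measurable)
  refine (integrable_prod_iff hmeasf.aestronglyMeasurable).2 ⟨?_, ?_⟩
  · filter_upwards [ae_restrict_mem measurableSet_Ioi, hane w] with r hr hne
    rcases lt_or_ge r 1 with h1 | h1
    · show Integrable (fun θ : ℝ => r • G w (Complex.polarCoord.symm (r, θ)))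
        (volume.restrict (Ioo (-π) π))
      have heq : (fun θ : ℝ => r • G w (Complex.polarCoord.symm (r, θ)))
          = fun θ : ℝ => r • (F2 w r θ - F1 w r θ) := by
        funext θ; rw [G_slice_lt w r hr h1]
      rw [heq]
      exact (((F2_integrable hw hr h1).sub (F1_integrable hw hr h1 hne)).smul r)
    · show Integrable (fun θ : ℝ => r • G w (Complex.polarCoord.symm (r, θ)))
        (volume.restrict (Ioo (-π) π))
      have heq : (fun θ : ℝ => r • G w (Complex.polarCoord.symm (r, θ)))
          = fun _ : ℝ => (0:ℝ) := by
        funext θ; rw [G_slice_ge w r h1, smul_zero]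
      rw [heq]
      exact integrable_const 0
  · set B := 2 * π * (3 * Real.log 2 + |Real.log (1 - Complex.abs w)|) with hB
    have hBpos : 0 ≤ B := by
      have := Real.log_nonneg (one_le_two (α := ℝ))
      have := abs_nonneg (Real.log (1 - Complex.abs w))
      have := pi_pos
      nlinarith
    apply Integrable.mono' (g := (Ioo (0:ℝ) 1).indicator fun _ => B + 2 * π)
    · apply IntegrableOn.integrable_indicator _ measurableSet_Ioo
      refine integrableOn_const (ne_of_lt ?_)
      calc (volume.restrict (Ioi (0:ℝ))) (Ioo 0 1) ≤ volume (Ioo (0:ℝ) 1) :=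
            Measure.restrict_apply_le _ _
        _ < ⊤ := by rw [Real.volume_Ioo]; exact ENNReal.ofReal_lt_top
    · exact (hmeasf.aestronglyMeasurable.norm).integral_prod_right'
    · filter_upwards [ae_restrict_mem measurableSet_Ioi, hane w] with r hr hne
      rcases lt_or_ge r 1 with h1 | h1
      · have hmem : r ∈ Ioo (0:ℝ) 1 := ⟨hr, h1⟩
        rw [Set.indicator_of_mem hmem]
        have heq : (fun θ : ℝ => ‖r • G w (Complex.polarCoord.symm (r, θ))‖)
            = fun θ : ℝ => r * |F2 w r θ - F1 w r θ| := by
          funext θ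
          rw [G_slice_lt w r hr h1, norm_smul, Real.norm_eq_abs, Real.norm_eq_abs,
            abs_of_pos hr]
        show ‖∫ θ in Ioo (-π) π, ‖r • G w (Complex.polarCoord.symm (r, θ))‖‖ ≤ B + 2 * π
        rw [show (fun θ : ℝ => ‖r • G w (Complex.polarCoord.symm (r, θ))‖)
            = fun θ : ℝ => r * |F2 w r θ - F1 w r θ| from heq]  -- may need simp_rw
        rw [MeasureTheory.integral_const_mul]
        have hnn : 0 ≤ r * ∫ θ in Ioo (-π) π, |F2 w r θ - F1 w r θ| :=
          mul_nonneg hr.le (integral_nonneg fun θ => abs_nonneg _)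
        rw [Real.norm_eq_abs, abs_of_nonneg hnn]
        have hbound := slice_abs_bound hw hr h1 hne
        have hmul := mul_le_mul_of_nonneg_left hbound hr.le
        have hrlog : -(r * Real.log r) ≤ 1 := by
          have hinv := Real.log_le_sub_one_of_pos (inv_pos.2 hr)
          rw [Real.log_inv] at hinv
          have hrr : r * r⁻¹ = 1 := mul_inv_cancel₀ hr.ne'
          have hstep := mul_le_mul_of_nonneg_left hinv hr.le
          have he1 : r * (r⁻¹ - 1) = 1 - r := by rw [mul_sub, hrr, mul_one]
          have he2 : r * -Real.log r = -(r * Real.log r) := by ring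
          have hr' : (0:ℝ) < r := hr
          linarith
        calc r * ∫ θ in Ioo (-π) π, |F2 w r θ - F1 w r θ|
            ≤ r * (B - 2 * π * Real.log r) := hmul
          _ = r * B - 2 * π * (r * Real.log r) := by ring
          _ ≤ B + 2 * π := by
              have hpi : (0:ℝ) < π := pi_pos
              have e1 : r * B ≤ B := by nlinarith
              have e3 := mul_le_mul_of_nonneg_left hrlog (by positivity : (0:ℝ) ≤ 2*π)
              nlinarith
      · have hnm : r ∉ Ioo (0:ℝ) 1 := fun hmem => absurd hmem.2 (not_lt.2 h1)
        rw [Set.indicator_of_notMem hnm]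
        have heq : (fun θ : ℝ => ‖r • G w (Complex.polarCoord.symm (r, θ))‖)
            = fun _ : ℝ => (0:ℝ) := by
          funext θ; rw [G_slice_ge w r h1, smul_zero, norm_zero]
        show ‖∫ θ in Ioo (-π) π, ‖r • G w (Complex.polarCoord.symm (r, θ))‖‖ ≤ 0
        rw [heq]
        simp

lemma key_value (w : ℂ) (hw : Complex.abs w < 1) :
    (∫ p in Ioi (0:ℝ) ×ˢ Ioo (-π) π, p.1 • G w (Complex.polarCoord.symm p)
        ∂(volume.prod volume))
      = π * (1 - Complex.abs w ^ 2) / 2 := by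
  have hint : IntegrableOn (fun p : ℝ × ℝ => p.1 • G w (Complex.polarCoord.symm p))
      (Ioi (0:ℝ) ×ˢ Ioo (-π) π) (volume.prod volume) := by
    rw [IntegrableOn, ← Measure.prod_restrict]
    exact key_integrable w hw
  rw [setIntegral_prod _ hint]
  have hae : ∀ᵐ r ∂(volume.restrict (Ioi (0:ℝ))),
      (∫ θ in Ioo (-π) π, r • G w (Complex.polarCoord.symm (r, θ)))
        = (Ioo (0:ℝ) 1).indicator
            (fun r => -(2 * π) * (r * Real.log (max r (Complex.abs w)))) r := by
    filter_upwards [ae_restrict_mem measurableSet_Ioi, hane w] with r hr hne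
    rcases lt_or_ge r 1 with h1 | h1
    · have hm : r ∈ Ioo (0:ℝ) 1 := ⟨hr, h1⟩
      rw [Set.indicator_of_mem hm]
      have heq : (fun θ : ℝ => r • G w (Complex.polarCoord.symm (r, θ)))
          = fun θ : ℝ => r • (F2 w r θ - F1 w r θ) := by
        funext θ; rw [G_slice_lt w r hr h1]
      rw [heq, MeasureTheory.integral_smul,
        MeasureTheory.integral_sub (F2_integrable hw hr h1) (F1_integrable hw hr h1 hne),
        F2_integral hw hr h1, F1_integral hw hr h1 hne]
      simp only [smul_eq_mul]
      ring
    · rw [Set.indicator_of_notMem (fun hmem => absurd hmem.2 (not_lt.2 h1))]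
      have heq : (fun θ : ℝ => r • G w (Complex.polarCoord.symm (r, θ)))
          = fun _ : ℝ => (0:ℝ) := by
        funext θ; rw [G_slice_ge w r h1, smul_zero]
      rw [heq, MeasureTheory.integral_zero]
  rw [integral_congr_ae hae, setIntegral_indicator measurableSet_Ioo,
    show Ioi (0:ℝ) ∩ Ioo 0 1 = Ioo 0 1 from
      Set.inter_eq_self_of_subset_right (fun x hx => hx.1),
    MeasureTheory.integral_const_mul,
    radial_integral (Complex.abs w) (Complex.abs.nonneg w) hw]
  ring

/-- For the Green kernel `Φ(ζ;w) = (1/2π) log|(ζ-w)/(1-w̄ζ)|` of the Laplacian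
on the unit disc, `∫∫_B |Φ(ζ;w)| dξdη = (1-|w|²)/4 ≤ 1/4`. -/
theorem green_kernel_abs_integral (w : ℂ) (hw : w ∈ Metric.ball (0 : ℂ) 1) :
    ((∫ ζ in Metric.ball (0 : ℂ) 1,
        |(1 / (2 * Real.pi)) *
          Real.log ‖(ζ - w) / (1 - (starRingEnd ℂ) w * ζ)‖|)
      = (1 - ‖w‖ ^ 2) / 4)
    ∧ ((∫ ζ in Metric.ball (0 : ℂ) 1,
        |(1 / (2 * Real.pi)) *
          Real.log ‖(ζ - w) / (1 - (starRingEnd ℂ) w * ζ)‖|)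
      ≤ 1 / 4) := by
  simp only [Complex.norm_eq_abs]
  have hw' : Complex.abs w < 1 := by
    simpa [Metric.mem_ball, dist_zero_right, Complex.norm_eq_abs] using hw
  have hmain : (∫ ζ in Metric.ball (0 : ℂ) 1,
      |(1 / (2 * Real.pi)) *
        Real.log (Complex.abs ((ζ - w) / (1 - (starRingEnd ℂ) w * ζ)))|)
      = (1 - Complex.abs w ^ 2) / 4 := by
    have hstep : ∀ᵐ ζ ∂(volume.restrict (Metric.ball (0:ℂ) 1)),
        |(1 / (2 * Real.pi)) *
            Real.log (Complex.abs ((ζ - w) / (1 - (starRingEnd ℂ) w * ζ)))|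
          = (1 / (2 * Real.pi)) *
            (Real.log (Complex.abs (1 - (starRingEnd ℂ) w * ζ))
              - Real.log (Complex.abs (ζ - w))) := by
      have hne_ae : ∀ᵐ ζ : ℂ ∂volume, ζ ≠ w := by
        rw [ae_iff]
        have : {ζ : ℂ | ¬ ζ ≠ w} = {w} := by ext ζ; simp
        rw [this]
        exact measure_singleton _
      filter_upwards [ae_restrict_mem measurableSet_ball, ae_restrict_of_ae hne_ae]
        with ζ hball hne
      have hζ : Complex.abs ζ < 1 := by
        simpa [Metric.mem_ball, dist_zero_right, Complex.norm_eq_abs] using hball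
      have hden0 : (1:ℂ) - (starRingEnd ℂ) w * ζ ≠ 0 := by
        intro h
        rw [sub_eq_zero] at h
        have : Complex.abs ((starRingEnd ℂ) w * ζ) = 1 := by rw [← h]; simp
        rw [map_mul, Complex.abs_conj] at this
        nlinarith [Complex.abs.nonneg w, Complex.abs.nonneg ζ]
      have hnum0 : ζ - w ≠ 0 := sub_ne_zero.2 hne
      have hsq : Complex.normSq (1 - (starRingEnd ℂ) w * ζ) - Complex.normSq (ζ - w)
          = (1 - Complex.normSq w) * (1 - Complex.normSq ζ) := by
        simp only [Complex.normSq_apply, Complex.sub_re, Complex.sub_im, Complex.mul_re,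
          Complex.mul_im, Complex.one_re, Complex.one_im, Complex.conj_re, Complex.conj_im]
        ring
      have hnsw : Complex.normSq w < 1 := by
        rw [← Complex.sq_abs]
        nlinarith [Complex.abs.nonneg w]
      have hnsz : Complex.normSq ζ < 1 := by
        rw [← Complex.sq_abs]
        nlinarith [Complex.abs.nonneg ζ]
      have hle : Complex.abs (ζ - w) ≤ Complex.abs (1 - (starRingEnd ℂ) w * ζ) := by
        rw [Complex.abs_apply, Complex.abs_apply]
        apply Real.sqrt_le_sqrt
        nlinarith
      have hdenpos : 0 < Complex.abs (1 - (starRingEnd ℂ) w * ζ) := Complex.abs.pos hden0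
      have hnumpos : 0 < Complex.abs (ζ - w) := Complex.abs.pos hnum0
      have hq : Complex.abs ((ζ - w) / (1 - (starRingEnd ℂ) w * ζ))
          = Complex.abs (ζ - w) / Complex.abs (1 - (starRingEnd ℂ) w * ζ) := map_div₀ _ _ _
      have hq1 : Complex.abs ((ζ - w) / (1 - (starRingEnd ℂ) w * ζ)) ≤ 1 := by
        rw [hq]
        exact div_le_one_of_le₀ hle hdenpos.le
      have hlog : Real.log (Complex.abs ((ζ - w) / (1 - (starRingEnd ℂ) w * ζ)))
          = Real.log (Complex.abs (ζ - w))
            - Real.log (Complex.abs (1 - (starRingEnd ℂ) w * ζ)) := by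
        rw [hq, Real.log_div hnumpos.ne' hdenpos.ne']
      have hlognp : Real.log (Complex.abs ((ζ - w) / (1 - (starRingEnd ℂ) w * ζ))) ≤ 0 :=
        Real.log_nonpos (Complex.abs.nonneg _) hq1
      rw [abs_mul, abs_of_pos (by positivity : (0:ℝ) < 1 / (2 * Real.pi)),
        abs_of_nonpos hlognp, hlog]
      ring
    rw [integral_congr_ae hstep, MeasureTheory.integral_const_mul]
    have hindic : (∫ ζ in Metric.ball (0:ℂ) 1,
        (Real.log (Complex.abs (1 - (starRingEnd ℂ) w * ζ))
          - Real.log (Complex.abs (ζ - w))))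
        = ∫ ζ : ℂ, G w ζ := by
      rw [G, MeasureTheory.integral_indicator measurableSet_ball]
    rw [hindic, ← Complex.integral_comp_polarCoord_symm (G w)]
    have htarget : polarCoord.target = Ioi (0:ℝ) ×ˢ Ioo (-π) π := rfl
    rw [htarget]
    have hvol : (volume : Measure (ℝ × ℝ)) = volume.prod volume := MeasureTheory.Measure.volume_eq_prod _ _
    rw [hvol, key_value w hw']
    have hπ : Real.pi ≠ 0 := pi_ne_zero
    field_simp
    ring
  refine ⟨hmain, ?_⟩
  rw [hmain]
  nlinarith [sq_nonneg (Complex.abs w)]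
end

section
/- Quadratic growth estimate for the Grassmann torsion potential: if τ^{(σθ)} : B → ℝ, 1 ≤ σ,θ ≤ n, are C¹ functions with τ^{(σθ)} = -τ^{(θσ)}, and δτ^{(σθ)} := Σ_{ω=1}^n det(∇τ^{(σω)}, ∇τ^{(ωθ)}), then with 𝒯 := (τ^{(σθ)})_{σ<θ} ∈ ℝ^{n(n-1)/2} one has |δ𝒯| ≤ √(n-2) |𝒯_u||𝒯_v| ≤ (√(n-2)/2)|∇𝒯|², where |δ𝒯|² = Σ_{σ<θ}(δτ^{(σθ)})². -/
open Finset

private lemma fin_val_min' {n : ℕ} (x y : Fin n) :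
    ((min x y : Fin n) : ℕ) = min (x : ℕ) (y : ℕ) := by
  rcases le_total x y with h | h
  · rw [min_eq_left h, min_eq_left (by exact_mod_cast h)]
  · rw [min_eq_right h, min_eq_right (by exact_mod_cast h)]

private lemma fin_val_max' {n : ℕ} (x y : Fin n) :
    ((max x y : Fin n) : ℕ) = max (x : ℕ) (y : ℕ) := by
  rcases le_total x y with h | h
  · rw [max_eq_right h, max_eq_right (by exact_mod_cast h)]
  · rw [max_eq_left h, max_eq_left (by exact_mod_cast h)]

private lemma grassmann_core {n : ℕ} (a b : Fin n → Fin n → ℝ)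
    (ha : ∀ σ θ, a σ θ = - a θ σ) (hb : ∀ σ θ, b σ θ = - b θ σ) :
    ∑ p ∈ Finset.univ.filter (fun p : Fin n × Fin n => p.1 < p.2),
        ∑ ω : Fin n, (a p.1 ω * b ω p.2 - b p.1 ω * a ω p.2) ^ 2
      ≤ (∑ p ∈ Finset.univ.filter (fun p : Fin n × Fin n => p.1 < p.2), (a p.1 p.2) ^ 2) *
        (∑ p ∈ Finset.univ.filter (fun p : Fin n × Fin n => p.1 < p.2), (b p.1 p.2) ^ 2) := by
  classical
  set P : Finset (Fin n × Fin n) := Finset.univ.filter (fun p : Fin n × Fin n => p.1 < p.2)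
    with hP
  set A := ∑ p ∈ P, (a p.1 p.2) ^ 2 with hA
  set Bv := ∑ p ∈ P, (b p.1 p.2) ^ 2 with hBv
  set C := ∑ p ∈ P, a p.1 p.2 * b p.1 p.2 with hC
  have haa : ∀ σ, a σ σ = 0 := fun σ => by have := ha σ σ; linarith
  have hbb : ∀ σ, b σ σ = 0 := fun σ => by have := hb σ σ; linarith
  set e : Fin n → Fin n → Fin n → ℝ := fun σ θ ω => a σ ω * b ω θ - b σ ω * a ω θ with he
  set E := ∑ p ∈ P, ∑ ω : Fin n, (e p.1 p.2 ω) ^ 2 with hE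
  have hesym : ∀ σ θ ω, e θ σ ω = - e σ θ ω := by
    intro σ θ ω
    simp only [he]
    rw [ha θ ω, hb ω σ, hb θ ω, ha ω σ]
    ring
  have hzero : ∀ σ θ ω, (σ = θ ∨ ω = σ ∨ ω = θ) → e σ θ ω = 0 := by
    intro σ θ ω h
    rcases h with h | h | h
    · subst h; have := hesym σ σ ω; linarith
    · subst h; simp only [he, haa, hbb]; ring
    · subst h; simp only [he, haa, hbb]; ring
  set G := ∑ x : (Fin n × Fin n) × Fin n, (e x.1.1 x.1.2 x.2) ^ 2 with hG
  -- Step 1 : G = 2 * E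
  have hG2E : G = 2 * E := by
    have h1 : G = ∑ p : Fin n × Fin n, ∑ ω : Fin n, (e p.1 p.2 ω) ^ 2 := by
      rw [hG, Fintype.sum_prod_type]
    rw [h1]
    have h2 : ∀ p : Fin n × Fin n,
        (∑ ω : Fin n, (e p.1 p.2 ω) ^ 2)
          = (if p.1 < p.2 then ∑ ω : Fin n, (e p.1 p.2 ω) ^ 2 else 0)
            + (if p.2 < p.1 then ∑ ω : Fin n, (e p.2 p.1 ω) ^ 2 else 0) := by
      intro p
      rcases lt_trichotomy p.1 p.2 with h | h | h
      · rw [if_pos h, if_neg (asymm h), add_zero]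
      · rw [if_neg (by rw [h]; exact lt_irrefl _), if_neg (by rw [h]; exact lt_irrefl _)]
        rw [Finset.sum_congr rfl fun ω _ => by rw [hzero p.1 p.2 ω (Or.inl h)]]
        simp
      · rw [if_neg (asymm h), if_pos h, zero_add]
        refine Finset.sum_congr rfl fun ω _ => ?_
        rw [hesym p.2 p.1 ω]; ring
    rw [Finset.sum_congr rfl fun p _ => h2 p, Finset.sum_add_distrib,
      ← Finset.sum_filter, ← Finset.sum_filter]
    have hswap : ∑ p ∈ Finset.univ.filter (fun p : Fin n × Fin n => p.2 < p.1),
        ∑ ω : Fin n, (e p.2 p.1 ω) ^ 2 = E := by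
      rw [hE, hP]
      refine Finset.sum_nbij' (fun p => (p.2, p.1)) (fun p => (p.2, p.1)) ?_ ?_ ?_ ?_ ?_
      all_goals intro p hp
      · simp only [Finset.mem_filter, Finset.mem_univ, true_and] at hp ⊢; exact hp
      · simp only [Finset.mem_filter, Finset.mem_univ, true_and] at hp ⊢; exact hp
      · rfl
      · rfl
      · rfl
    rw [hswap, ← hP, ← hE]
    ring
  -- Step 2 : G as a sum over distinct triples
  set T : Finset ((Fin n × Fin n) × Fin n) := Finset.univ.filter
    (fun x => x.1.1 ≠ x.1.2 ∧ x.2 ≠ x.1.1 ∧ x.2 ≠ x.1.2) with hT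
  have hGT : G = ∑ x ∈ T, (e x.1.1 x.1.2 x.2) ^ 2 := by
    rw [hG, hT]
    refine (Finset.sum_filter_of_ne ?_).symm
    intro x _ hx
    refine ⟨?_, ?_, ?_⟩
    · intro h; exact hx (by rw [hzero _ _ _ (Or.inl h)]; norm_num)
    · intro h; exact hx (by rw [hzero _ _ _ (Or.inr (Or.inl h))]; norm_num)
    · intro h; exact hx (by rw [hzero _ _ _ (Or.inr (Or.inr h))]; norm_num)
  -- Step 3 : injection into P ×ˢ P
  set φ : (Fin n × Fin n) × Fin n → (Fin n × Fin n) × (Fin n × Fin n) :=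
    fun x => ((min x.1.1 x.2, max x.1.1 x.2), (min x.2 x.1.2, max x.2 x.1.2)) with hφ
  set g : (Fin n × Fin n) × (Fin n × Fin n) → ℝ :=
    fun y => (a y.1.1 y.1.2 * b y.2.1 y.2.2 - a y.2.1 y.2.2 * b y.1.1 y.1.2) ^ 2 with hg
  have hfg : ∀ x ∈ T, (e x.1.1 x.1.2 x.2) ^ 2 = g (φ x) := by
    rintro ⟨⟨σ, θ⟩, ω⟩ hx
    simp only [hT, Finset.mem_filter, Finset.mem_univ, true_and] at hx
    obtain ⟨hστ, hωσ, hωθ⟩ := hx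
    simp only [hφ, hg, he]
    rcases Ne.lt_or_gt hωσ with h1 | h1 <;> rcases Ne.lt_or_gt hωθ with h2 | h2
    · -- ω < σ, ω < θ
      rw [min_eq_right h1.le, max_eq_left h1.le, min_eq_left h2.le, max_eq_right h2.le]
      rw [ha σ ω, hb σ ω]; ring
    · -- ω < σ, θ < ω
      rw [min_eq_right h1.le, max_eq_left h1.le, min_eq_right h2.le, max_eq_left h2.le]
      rw [ha σ ω, hb σ ω, ha ω θ, hb ω θ]; ring
    · -- σ < ω, ω < θ
      rw [min_eq_left h1.le, max_eq_right h1.le, min_eq_left h2.le, max_eq_right h2.le]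
      ring
    · -- σ < ω, θ < ω
      rw [min_eq_left h1.le, max_eq_right h1.le, min_eq_right h2.le, max_eq_left h2.le]
      rw [ha ω θ, hb ω θ]; ring
  have hinj : ∀ x ∈ T, ∀ y ∈ T, φ x = φ y → x = y := by
    rintro ⟨⟨σ, θ⟩, ω⟩ hx ⟨⟨σ', θ'⟩, ω'⟩ hy hxy
    simp only [hT, Finset.mem_filter, Finset.mem_univ, true_and] at hx hy
    obtain ⟨h1, h2, h3⟩ := hx
    obtain ⟨h1', h2', h3'⟩ := hy
    have e1 : (min σ ω = min σ' ω' ∧ max σ ω = max σ' ω') ∧ min ω θ = min ω' θ' ∧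
        max ω θ = max ω' θ' := by
      simpa [hφ, Prod.ext_iff] using hxy
    obtain ⟨⟨ea1, ea2⟩, eb1, eb2⟩ := e1
    have v1 : min (σ:ℕ) (ω:ℕ) = min (σ':ℕ) (ω':ℕ) := by
      have := congrArg Fin.val ea1; rwa [fin_val_min', fin_val_min'] at this
    have v2 : max (σ:ℕ) (ω:ℕ) = max (σ':ℕ) (ω':ℕ) := by
      have := congrArg Fin.val ea2; rwa [fin_val_max', fin_val_max'] at this
    have v3 : min (ω:ℕ) (θ:ℕ) = min (ω':ℕ) (θ':ℕ) := by
      have := congrArg Fin.val eb1; rwa [fin_val_min', fin_val_min'] at this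
    have v4 : max (ω:ℕ) (θ:ℕ) = max (ω':ℕ) (θ':ℕ) := by
      have := congrArg Fin.val eb2; rwa [fin_val_max', fin_val_max'] at this
    have d1 : (σ:ℕ) ≠ (θ:ℕ) := fun h => h1 (Fin.val_injective h)
    have d2 : (ω:ℕ) ≠ (σ:ℕ) := fun h => h2 (Fin.val_injective h)
    have d3 : (ω:ℕ) ≠ (θ:ℕ) := fun h => h3 (Fin.val_injective h)
    have d1' : (σ':ℕ) ≠ (θ':ℕ) := fun h => h1' (Fin.val_injective h)
    have d2' : (ω':ℕ) ≠ (σ':ℕ) := fun h => h2' (Fin.val_injective h)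
    have d3' : (ω':ℕ) ≠ (θ':ℕ) := fun h => h3' (Fin.val_injective h)
    have hfin : (σ:ℕ) = (σ':ℕ) ∧ (θ:ℕ) = (θ':ℕ) ∧ (ω:ℕ) = (ω':ℕ) := by omega
    simp only [Prod.mk.injEq]
    exact ⟨⟨Fin.val_injective hfin.1, Fin.val_injective hfin.2.1⟩,
      Fin.val_injective hfin.2.2⟩
  have himg : T.image φ ⊆ P ×ˢ P := by
    intro y hy
    simp only [Finset.mem_image] at hy
    obtain ⟨x, hx, rfl⟩ := hy
    simp only [hT, Finset.mem_filter, Finset.mem_univ, true_and] at hx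
    obtain ⟨h1, h2, h3⟩ := hx
    simp only [hφ, hP, Finset.mem_product, Finset.mem_filter, Finset.mem_univ, true_and]
    constructor
    · exact min_lt_max.mpr (Ne.symm h2)
    · exact min_lt_max.mpr h3
  have hstep3 : G ≤ ∑ y ∈ P ×ˢ P, g y := by
    rw [hGT, Finset.sum_congr rfl hfg, ← Finset.sum_image hinj]
    exact Finset.sum_le_sum_of_subset_of_nonneg himg
      (fun y _ _ => by simp only [hg]; positivity)
  -- Step 4 : expansion of the Lagrange-type sum
  have hstep4 : ∑ y ∈ P ×ˢ P, g y = A * Bv + Bv * A - 2 * C * C := by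
    rw [Finset.sum_product]
    have hin : ∀ p ∈ P, (∑ q ∈ P, g (p, q))
        = (a p.1 p.2) ^ 2 * Bv + (b p.1 p.2) ^ 2 * A - (2 * (a p.1 p.2 * b p.1 p.2)) * C := by
      intro p _
      rw [hBv, hA, hC, Finset.mul_sum, Finset.mul_sum, Finset.mul_sum, ← Finset.sum_add_distrib,
        ← Finset.sum_sub_distrib]
      refine Finset.sum_congr rfl fun q _ => ?_
      simp only [hg]; ring
    rw [Finset.sum_congr rfl hin, Finset.sum_sub_distrib, Finset.sum_add_distrib,
      ← Finset.sum_mul, ← Finset.sum_mul, ← Finset.sum_mul, ← hA, ← hBv]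
    have : ∑ p ∈ P, 2 * (a p.1 p.2 * b p.1 p.2) = 2 * C := by
      rw [hC, Finset.mul_sum]
    rw [this]
  have hCsq : 0 ≤ C * C := mul_self_nonneg C
  have : 2 * E ≤ 2 * (A * Bv) := by
    rw [← hG2E]
    calc G ≤ ∑ y ∈ P ×ˢ P, g y := hstep3
    _ = A * Bv + Bv * A - 2 * C * C := hstep4
    _ ≤ 2 * (A * Bv) := by linarith
  have hEfin : E ≤ A * Bv := by linarith
  -- conclude: the statement is E ≤ A * Bv up to defeq
  exact hEfin

private lemma grassmann_key {n : ℕ} (hn : 2 ≤ n) (a b : Fin n → Fin n → ℝ)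
    (ha : ∀ σ θ, a σ θ = - a θ σ) (hb : ∀ σ θ, b σ θ = - b θ σ) :
    (Real.sqrt (∑ σ : Fin n, ∑ θ : Fin n, if σ < θ then
          (∑ ω : Fin n, (a σ ω * b ω θ - b σ ω * a ω θ)) ^ 2 else 0)
        ≤ Real.sqrt ((n : ℝ) - 2) *
            (Real.sqrt (∑ σ : Fin n, ∑ θ : Fin n, if σ < θ then (a σ θ) ^ 2 else 0) *
             Real.sqrt (∑ σ : Fin n, ∑ θ : Fin n, if σ < θ then (b σ θ) ^ 2 else 0)))
      ∧ (Real.sqrt ((n : ℝ) - 2) *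
            (Real.sqrt (∑ σ : Fin n, ∑ θ : Fin n, if σ < θ then (a σ θ) ^ 2 else 0) *
             Real.sqrt (∑ σ : Fin n, ∑ θ : Fin n, if σ < θ then (b σ θ) ^ 2 else 0))
        ≤ (Real.sqrt ((n : ℝ) - 2) / 2) *
            ((∑ σ : Fin n, ∑ θ : Fin n, if σ < θ then (a σ θ) ^ 2 else 0)
              + (∑ σ : Fin n, ∑ θ : Fin n, if σ < θ then (b σ θ) ^ 2 else 0))) := by
  classical
  have hsum : ∀ f : Fin n → Fin n → ℝ,
      (∑ σ : Fin n, ∑ θ : Fin n, if σ < θ then f σ θ else 0)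
        = ∑ p ∈ Finset.univ.filter (fun p : Fin n × Fin n => p.1 < p.2), f p.1 p.2 := by
    intro f
    rw [Finset.sum_filter, ← Finset.univ_product_univ, Finset.sum_product]
  have haa : ∀ σ, a σ σ = 0 := fun σ => by have := ha σ σ; linarith
  have hbb : ∀ σ, b σ σ = 0 := fun σ => by have := hb σ σ; linarith
  have hn2 : (0:ℝ) ≤ (n:ℝ) - 2 := by
    have : (2:ℝ) ≤ (n:ℝ) := by exact_mod_cast hn
    linarith
  have r1 := hsum (fun σ θ => (∑ ω : Fin n, (a σ ω * b ω θ - b σ ω * a ω θ)) ^ 2)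
  have r2 := hsum (fun σ θ => (a σ θ) ^ 2)
  have r3 := hsum (fun σ θ => (b σ θ) ^ 2)
  rw [r1, r2, r3]
  set P : Finset (Fin n × Fin n) := Finset.univ.filter (fun p : Fin n × Fin n => p.1 < p.2)
    with hP
  set A := ∑ p ∈ P, (a p.1 p.2) ^ 2 with hA
  set Bv := ∑ p ∈ P, (b p.1 p.2) ^ 2 with hBv
  have hA0 : 0 ≤ A := Finset.sum_nonneg fun p _ => sq_nonneg _
  have hBv0 : 0 ≤ Bv := Finset.sum_nonneg fun p _ => sq_nonneg _
  -- Cauchy–Schwarz with n - 2 nonzero summands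
  have hzero : ∀ σ θ ω : Fin n, (ω = σ ∨ ω = θ) →
      a σ ω * b ω θ - b σ ω * a ω θ = 0 := by
    intro σ θ ω h
    rcases h with h | h <;> subst h <;> simp [haa, hbb]
  have hcs : ∀ σ θ : Fin n, σ ≠ θ →
      (∑ ω : Fin n, (a σ ω * b ω θ - b σ ω * a ω θ)) ^ 2
        ≤ ((n:ℝ) - 2) * ∑ ω : Fin n, (a σ ω * b ω θ - b σ ω * a ω θ) ^ 2 := by
    intro σ θ hne
    set s : Finset (Fin n) := Finset.univ \ {σ, θ} with hs
    have hsub : ∑ ω : Fin n, (a σ ω * b ω θ - b σ ω * a ω θ)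
        = ∑ ω ∈ s, (a σ ω * b ω θ - b σ ω * a ω θ) := by
      refine (Finset.sum_subset (Finset.sdiff_subset) ?_).symm
      intro x _ hx
      have : x = σ ∨ x = θ := by
        have h' := by simpa [hs, Finset.mem_sdiff] using hx
        tauto
      exact hzero σ θ x this
    have hcard : (s.card : ℝ) = (n:ℝ) - 2 := by
      have : s.card = n - 2 := by
        rw [hs, Finset.card_sdiff_of_subset (Finset.subset_univ _), Finset.card_pair hne,
          Finset.card_univ, Fintype.card_fin]
      rw [this, Nat.cast_sub hn]
      norm_num
    calc (∑ ω : Fin n, (a σ ω * b ω θ - b σ ω * a ω θ)) ^ 2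
        = (∑ ω ∈ s, (a σ ω * b ω θ - b σ ω * a ω θ)) ^ 2 := by rw [hsub]
      _ ≤ (s.card : ℝ) * ∑ ω ∈ s, (a σ ω * b ω θ - b σ ω * a ω θ) ^ 2 :=
          sq_sum_le_card_mul_sum_sq
      _ ≤ ((n:ℝ) - 2) * ∑ ω : Fin n, (a σ ω * b ω θ - b σ ω * a ω θ) ^ 2 := by
          rw [hcard]
          refine mul_le_mul_of_nonneg_left ?_ hn2
          exact Finset.sum_le_sum_of_subset_of_nonneg (Finset.sdiff_subset)
            (fun x _ _ => sq_nonneg _)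
  have hD : ∑ p ∈ P, (∑ ω : Fin n, (a p.1 ω * b ω p.2 - b p.1 ω * a ω p.2)) ^ 2
      ≤ ((n:ℝ) - 2) * (A * Bv) := by
    calc ∑ p ∈ P, (∑ ω : Fin n, (a p.1 ω * b ω p.2 - b p.1 ω * a ω p.2)) ^ 2
        ≤ ∑ p ∈ P, ((n:ℝ) - 2) *
            ∑ ω : Fin n, (a p.1 ω * b ω p.2 - b p.1 ω * a ω p.2) ^ 2 := by
          refine Finset.sum_le_sum fun p hp => ?_
          have hlt : p.1 < p.2 := by
            simpa [hP] using hp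
          exact hcs p.1 p.2 hlt.ne
      _ = ((n:ℝ) - 2) * ∑ p ∈ P,
            ∑ ω : Fin n, (a p.1 ω * b ω p.2 - b p.1 ω * a ω p.2) ^ 2 := by
          rw [Finset.mul_sum]
      _ ≤ ((n:ℝ) - 2) * (A * Bv) :=
          mul_le_mul_of_nonneg_left (grassmann_core a b ha hb) hn2
  constructor
  · calc Real.sqrt (∑ p ∈ P, (∑ ω : Fin n, (a p.1 ω * b ω p.2 - b p.1 ω * a ω p.2)) ^ 2)
        ≤ Real.sqrt (((n:ℝ) - 2) * (A * Bv)) := Real.sqrt_le_sqrt hD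
      _ = Real.sqrt ((n:ℝ) - 2) * (Real.sqrt A * Real.sqrt Bv) := by
          rw [Real.sqrt_mul hn2, Real.sqrt_mul hA0]
  · have hmean : Real.sqrt A * Real.sqrt Bv ≤ (A + Bv) / 2 := by
      nlinarith [sq_nonneg (Real.sqrt A - Real.sqrt Bv), Real.sq_sqrt hA0,
        Real.sq_sqrt hBv0]
    have hs2 : (0:ℝ) ≤ Real.sqrt ((n:ℝ) - 2) := Real.sqrt_nonneg _
    nlinarith [mul_le_mul_of_nonneg_left hmean hs2]

/-- Quadratic growth estimate for the Grassmann torsion potential: for skew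
families `τ^{(σθ)}` of `C¹` functions on the unit disc, with
`δτ^{(σθ)} = Σ_ω det(∇τ^{(σω)}, ∇τ^{(ωθ)})`, one has
`|δ𝒯| ≤ √(n-2)|𝒯_u||𝒯_v| ≤ (√(n-2)/2)|∇𝒯|²` pointwise. -/
theorem grassmann_quadratic_growth {n : ℕ} (hn : 2 ≤ n)
    (B : Set (ℝ × ℝ)) (hB : B = {p : ℝ × ℝ | p.1 ^ 2 + p.2 ^ 2 < 1})
    (τ : Fin n → Fin n → ℝ × ℝ → ℝ)
    (hdiff : ∀ σ θ : Fin n, DifferentiableOn ℝ (τ σ θ) B)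
    (hskew : ∀ (σ θ : Fin n) (w : ℝ × ℝ), τ σ θ w = - τ θ σ w) :
    ∀ w ∈ B,
      (Real.sqrt (∑ σ : Fin n, ∑ θ : Fin n, if σ < θ then
          (∑ ω : Fin n,
            (fderiv ℝ (τ σ ω) w (1, 0) * fderiv ℝ (τ ω θ) w (0, 1)
              - fderiv ℝ (τ σ ω) w (0, 1) * fderiv ℝ (τ ω θ) w (1, 0))) ^ 2
          else 0)
        ≤ Real.sqrt ((n : ℝ) - 2) *
            (Real.sqrt (∑ σ : Fin n, ∑ θ : Fin n,
                if σ < θ then (fderiv ℝ (τ σ θ) w (1, 0)) ^ 2 else 0) *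
             Real.sqrt (∑ σ : Fin n, ∑ θ : Fin n,
                if σ < θ then (fderiv ℝ (τ σ θ) w (0, 1)) ^ 2 else 0)))
      ∧ (Real.sqrt ((n : ℝ) - 2) *
            (Real.sqrt (∑ σ : Fin n, ∑ θ : Fin n,
                if σ < θ then (fderiv ℝ (τ σ θ) w (1, 0)) ^ 2 else 0) *
             Real.sqrt (∑ σ : Fin n, ∑ θ : Fin n,
                if σ < θ then (fderiv ℝ (τ σ θ) w (0, 1)) ^ 2 else 0))
        ≤ (Real.sqrt ((n : ℝ) - 2) / 2) *
            ((∑ σ : Fin n, ∑ θ : Fin n,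
                if σ < θ then (fderiv ℝ (τ σ θ) w (1, 0)) ^ 2 else 0)
              + (∑ σ : Fin n, ∑ θ : Fin n,
                if σ < θ then (fderiv ℝ (τ σ θ) w (0, 1)) ^ 2 else 0))) := by
  intro w hw
  have hfd : ∀ σ θ : Fin n, fderiv ℝ (τ σ θ) w = - fderiv ℝ (τ θ σ) w := by
    intro σ θ
    have hτ : τ σ θ = fun z => -(τ θ σ z) := funext fun z => hskew σ θ z
    rw [hτ, fderiv_fun_neg]
  have ha : ∀ σ θ : Fin n, fderiv ℝ (τ σ θ) w (1, 0) = - fderiv ℝ (τ θ σ) w (1, 0) := by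
    intro σ θ; rw [hfd σ θ]; simp
  have hb : ∀ σ θ : Fin n, fderiv ℝ (τ σ θ) w (0, 1) = - fderiv ℝ (τ θ σ) w (0, 1) := by
    intro σ θ; rw [hfd σ θ]; simp
  exact grassmann_key hn (fun σ θ => fderiv ℝ (τ σ θ) w (1, 0))
    (fun σ θ => fderiv ℝ (τ σ θ) w (0, 1)) ha hb
end
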